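/- arXiv:2007.09576 — 4 statements merged into one kernel-verified Lean document; each statement's English description precedes it below -/
import Mathlib

section
/- σ_U² − σ_A² = E[{π_s β_t(Z) + π_t β_s(Z)}^T Σ(Z) {π_s β_t(Z) + π_t β_s(Z)}] / {π_t π_s (π_t + π_s)} + E[{β_t(Z) − β_s(Z)}^T Σ(Z) {β_t(Z) − β_s(Z)}] · {(π_t + π_s)^{-1} − 1}. -/
open MeasureTheory ProbabilityTheory Matrix
open scoped ProbabilityTheory


lemma dot_quad {d : ℕ} (S : Matrix (Fin d) (Fin d) ℝ) (b : Fin d → ℝ) :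
    ∑ j, ∑ l, b j * b l * S j l = b ⬝ᵥ (S *ᵥ b) := by
  simp only [dotProduct, Matrix.mulVec, Finset.mul_sum]
  exact Finset.sum_congr rfl fun j _ => Finset.sum_congr rfl fun l _ => by ring

lemma mul_memL1 {Ω : Type*} [MeasurableSpace Ω] {ν : Measure Ω} {f g : Ω → ℝ}
    (hf : MemLp f 2 ν) (hg : MemLp g 2 ν) : Integrable (fun ω => f ω * g ω) ν := by
  have := hg.smul (𝕜 := ℝ) hf (r := 1) (hpqr := ⟨by simp only [inv_one]; exact ENNReal.inv_two_add_inv_two⟩)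
  exact memLp_one_iff_integrable.mp this

lemma var_sub_proj {Ω : Type*} [MeasurableSpace Ω] {ν : Measure Ω} [IsProbabilityMeasure ν]
    {d : ℕ} (Y : Ω → ℝ) (X : Ω → Fin d → ℝ) (b : Fin d → ℝ)
    (hY : MemLp Y 2 ν) (hX : ∀ j, MemLp (fun ω => X ω j) 2 ν) :
    variance (fun ω => Y ω - ∑ j, X ω j * b j) ν
      = variance Y ν
        - 2 * ∑ j, b j * ((∫ ω, X ω j * Y ω ∂ν) - (∫ ω, X ω j ∂ν) * (∫ ω, Y ω ∂ν))
        + ∑ j, ∑ l, b j * b l *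
            ((∫ ω, X ω j * X ω l ∂ν) - (∫ ω, X ω j ∂ν) * (∫ ω, X ω l ∂ν)) := by
  set L : Ω → ℝ := fun ω => ∑ j, X ω j * b j with hLdef
  have hL : MemLp L 2 ν := by
    apply memLp_finset_sum
    intro j _
    simpa [mul_comm] using (hX j).const_mul (b j)
  have hIY : Integrable Y ν := hY.integrable one_le_two
  have hIL : Integrable L ν := hL.integrable one_le_two
  have hIY2 : Integrable (fun ω => Y ω ^ 2) ν := by simpa [sq] using mul_memL1 hY hY
  have hIYL : Integrable (fun ω => Y ω * L ω) ν := mul_memL1 hY hL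
  have hILL : Integrable (fun ω => L ω * L ω) ν := mul_memL1 hL hL
  have hIXY : ∀ j, Integrable (fun ω => X ω j * Y ω) ν := fun j => mul_memL1 (hX j) hY
  have hIXX : ∀ j l, Integrable (fun ω => X ω j * X ω l) ν := fun j l => mul_memL1 (hX j) (hX l)
  have hIX : ∀ j, Integrable (fun ω => X ω j) ν := fun j => (hX j).integrable one_le_two
  -- integral computations
  have hL1 : ∫ ω, L ω ∂ν = ∑ j, b j * ∫ ω, X ω j ∂ν := by
    rw [hLdef]
    rw [integral_finset_sum _ (fun j _ => (hIX j).mul_const (b j))]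
    refine Finset.sum_congr rfl fun j _ => ?_
    rw [integral_mul_const]; ring
  have hYL : ∫ ω, Y ω * L ω ∂ν = ∑ j, b j * ∫ ω, X ω j * Y ω ∂ν := by
    have : ∀ ω, Y ω * L ω = ∑ j, b j * (X ω j * Y ω) := by
      intro ω; rw [hLdef]; rw [Finset.mul_sum]; exact Finset.sum_congr rfl fun j _ => by ring
    simp_rw [this]
    rw [integral_finset_sum _ (fun j _ => (hIXY j).const_mul (b j))]
    exact Finset.sum_congr rfl fun j _ => integral_const_mul _ _
  have hLL : ∫ ω, L ω * L ω ∂ν = ∑ j, ∑ l, b j * b l * ∫ ω, X ω j * X ω l ∂ν := by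
    have : ∀ ω, L ω * L ω = ∑ j, ∑ l, b j * b l * (X ω j * X ω l) := by
      intro ω; rw [hLdef, Finset.sum_mul_sum]
      exact Finset.sum_congr rfl fun j _ => Finset.sum_congr rfl fun l _ => by ring
    simp_rw [this]
    rw [integral_finset_sum _ (fun j _ => integrable_finset_sum _
      (fun l _ => (hIXX j l).const_mul _))]
    refine Finset.sum_congr rfl fun j _ => ?_
    rw [integral_finset_sum _ (fun l _ => (hIXX j l).const_mul _)]
    exact Finset.sum_congr rfl fun l _ => integral_const_mul _ _
  have hsq : ∫ ω, (Y ω - L ω) ^ 2 ∂ν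
      = (∫ ω, Y ω ^ 2 ∂ν) - 2 * (∫ ω, Y ω * L ω ∂ν) + ∫ ω, L ω * L ω ∂ν := by
    have : (fun ω => (Y ω - L ω) ^ 2)
        = fun ω => Y ω ^ 2 - 2 * (Y ω * L ω) + L ω * L ω := funext fun ω => by ring
    have h1 : Integrable (fun ω => Y ω ^ 2 - 2 * (Y ω * L ω)) ν := by
      exact hIY2.sub (hIYL.const_mul 2)
    rw [this, integral_add h1 hILL, integral_sub hIY2 (hIYL.const_mul 2), integral_const_mul]
  have hvar1 : variance (fun ω => Y ω - L ω) ν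
      = (∫ ω, (Y ω - L ω) ^ 2 ∂ν) - (∫ ω, Y ω ∂ν - ∫ ω, L ω ∂ν) ^ 2 := by
    have he : (fun ω => Y ω - L ω) = Y - L := rfl
    rw [he, variance_eq_sub (hY.sub hL)]
    have e1 : ∫ ω, ((Y - L) ^ 2) ω ∂ν = ∫ ω, (Y ω - L ω) ^ 2 ∂ν := rfl
    have e2 : ∫ ω, (Y - L) ω ∂ν = ∫ ω, Y ω ∂ν - ∫ ω, L ω ∂ν := by
      rw [show (∫ ω, (Y - L) ω ∂ν) = ∫ ω, (Y ω - L ω) ∂ν from rfl, integral_sub hIY hIL]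
    rw [e1, e2]
  have hvar2 : variance Y ν = (∫ ω, Y ω ^ 2 ∂ν) - (∫ ω, Y ω ∂ν) ^ 2 := by
    rw [variance_eq_sub hY]; simp [sq]
  rw [hvar1, hsq, hYL, hLL, hL1, hvar2]
  -- expand sums
  have hA : ∑ j, b j * ((∫ ω, X ω j * Y ω ∂ν) - (∫ ω, X ω j ∂ν) * (∫ ω, Y ω ∂ν))
      = (∑ j, b j * ∫ ω, X ω j * Y ω ∂ν) - (∑ j, b j * ∫ ω, X ω j ∂ν) * ∫ ω, Y ω ∂ν := by
    rw [Finset.sum_mul, ← Finset.sum_sub_distrib]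
    exact Finset.sum_congr rfl fun j _ => by ring
  have hB : ∑ j, ∑ l, b j * b l * ((∫ ω, X ω j * X ω l ∂ν) - (∫ ω, X ω j ∂ν) * (∫ ω, X ω l ∂ν))
      = (∑ j, ∑ l, b j * b l * ∫ ω, X ω j * X ω l ∂ν)
        - (∑ j, b j * ∫ ω, X ω j ∂ν) * (∑ l, b l * ∫ ω, X ω l ∂ν) := by
    rw [Finset.sum_mul_sum, ← Finset.sum_sub_distrib]
    refine Finset.sum_congr rfl fun j _ => ?_
    rw [← Finset.sum_sub_distrib]
    exact Finset.sum_congr rfl fun l _ => by ring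
  rw [hA, hB]; ring


/-- In the population setup with strata `Z = g ∘ W`, adjustment covariate
`X = h ∘ W`, conditional covariance matrices `Smat z = var(X | Z = z)` (positive definite),
projection coefficients `β t z = Smat z⁻¹ cov(X, Y⁽ᵗ⁾ | Z = z)`, and
`σU² = E[var(Y⁽ᵗ⁾|Z)/πt + var(Y⁽ˢ⁾|Z)/πs]`,
`σA² = E[var(Y⁽ᵗ⁾ − Xᵀβ_t(Z)|Z)/πt + var(Y⁽ˢ⁾ − Xᵀβ_s(Z)|Z)/πs]
      + E[(β_t(Z) − β_s(Z))ᵀ Σ(Z) (β_t(Z) − β_s(Z))]`, one has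
`σU² − σA² = E[(πs β_t(Z) + πt β_s(Z))ᵀ Σ(Z) (πs β_t(Z) + πt β_s(Z))]/(πt πs (πt+πs))
      + E[(β_t(Z) − β_s(Z))ᵀ Σ(Z) (β_t(Z) − β_s(Z))]·((πt+πs)⁻¹ − 1)`. -/
theorem stmt3 {Ω : Type*} [MeasurableSpace Ω] (P : Measure Ω) [IsProbabilityMeasure P]
    {𝓦 : Type*} [MeasurableSpace 𝓦]
    {𝓩 : Type*} [Fintype 𝓩] [MeasurableSpace 𝓩] [MeasurableSingletonClass 𝓩]
    {k d : ℕ} (hk : 2 ≤ k)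
    (π : Fin k → ℝ) (hπ : ∀ t, π t ∈ Set.Ioo (0 : ℝ) 1) (hπsum : ∑ t, π t = 1)
    (Y : Fin k → Ω → ℝ) (W : Ω → 𝓦)
    (hYmeas : ∀ t, Measurable (Y t)) (hWmeas : Measurable W)
    (hY2 : ∀ t, MemLp (Y t) 2 P)
    (g : 𝓦 → 𝓩) (hg : Measurable g)
    (Z : Ω → 𝓩) (hZdef : ∀ ω, Z ω = g (W ω))
    (hZpos : ∀ z, 0 < P {ω | Z ω = z})
    (h : 𝓦 → Fin d → ℝ) (hh : Measurable h)
    (X : Ω → Fin d → ℝ) (hXdef : ∀ ω, X ω = h (W ω))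
    (hX2 : ∀ j, MemLp (fun ω => X ω j) 2 P)
    (hXY2 : ∀ t j, MemLp (fun ω => X ω j * Y t ω) 2 P)
    -- conditional measures and stratum probabilities
    (condP : 𝓩 → Measure Ω) (hcondP : ∀ z, condP z = P[|{ω | Z ω = z}])
    (pz : 𝓩 → ℝ) (hpz : ∀ z, pz z = (P {ω | Z ω = z}).toReal)
    -- conditional covariance matrices, assumed positive definite
    (Smat : 𝓩 → Matrix (Fin d) (Fin d) ℝ)
    (hSmat : ∀ z j l, Smat z j l
      = ∫ ω, X ω j * X ω l ∂(condP z)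
        - (∫ ω, X ω j ∂(condP z)) * (∫ ω, X ω l ∂(condP z)))
    (hSpd : ∀ z, (Smat z).PosDef)
    -- projection coefficients
    (β : Fin k → 𝓩 → Fin d → ℝ)
    (hβ : ∀ t z, β t z = (Smat z)⁻¹ *ᵥ fun j =>
      ∫ ω, X ω j * Y t ω ∂(condP z)
        - (∫ ω, X ω j ∂(condP z)) * (∫ ω, Y t ω ∂(condP z)))
    -- the two fixed treatments
    (tt ss : Fin k) (hts : tt ≠ ss)
    -- the asymptotic variance components
    (σU2 σA2 : ℝ)
    (hσU2 : σU2 = ∑ z, pz z *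
      (variance (Y tt) (condP z) / π tt + variance (Y ss) (condP z) / π ss))
    (hσA2 : σA2
      = (∑ z, pz z *
          (variance (fun ω => Y tt ω - ∑ j, X ω j * β tt z j) (condP z) / π tt
            + variance (fun ω => Y ss ω - ∑ j, X ω j * β ss z j) (condP z) / π ss))
        + ∑ z, pz z *
            ((β tt z - β ss z) ⬝ᵥ (Smat z *ᵥ (β tt z - β ss z)))) :
    σU2 - σA2
      = (∑ z, pz z *
          ((π ss • β tt z + π tt • β ss z) ⬝ᵥ
            (Smat z *ᵥ (π ss • β tt z + π tt • β ss z))))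
          / (π tt * π ss * (π tt + π ss))
        + (∑ z, pz z *
            ((β tt z - β ss z) ⬝ᵥ (Smat z *ᵥ (β tt z - β ss z))))
          * ((π tt + π ss)⁻¹ - 1) := by
  have hprob : ∀ z, IsProbabilityMeasure (condP z) := by
    intro z; rw [hcondP]; exact cond_isProbabilityMeasure (hZpos z).ne'
  have htrans : ∀ (f : Ω → ℝ), MemLp f 2 P → ∀ z, MemLp f 2 (condP z) := by
    intro f hf z
    rw [hcondP z]
    exact (hf.restrict _).smul_measure (ENNReal.inv_ne_top.mpr (hZpos z).ne')
  have key : ∀ (z : 𝓩) (t : Fin k),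
      variance (fun ω => Y t ω - ∑ j, X ω j * β t z j) (condP z)
        = variance (Y t) (condP z) - β t z ⬝ᵥ (Smat z *ᵥ β t z) := by
    intro z t
    haveI := hprob z
    have hv := var_sub_proj (Y t) X (β t z) (htrans _ (hY2 t) z) (fun j => htrans _ (hX2 j) z)
    have hSc : Smat z *ᵥ β t z = fun j =>
        (∫ ω, X ω j * Y t ω ∂(condP z))
          - (∫ ω, X ω j ∂(condP z)) * (∫ ω, Y t ω ∂(condP z)) := by
      rw [hβ t z, Matrix.mulVec_mulVec, Matrix.mul_nonsing_inv _ (hSpd z).det_pos.ne'.isUnit,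
        Matrix.one_mulVec]
    have hQ1 : ∑ j, β t z j * ((∫ ω, X ω j * Y t ω ∂(condP z))
          - (∫ ω, X ω j ∂(condP z)) * (∫ ω, Y t ω ∂(condP z)))
        = β t z ⬝ᵥ (Smat z *ᵥ β t z) := by rw [hSc]; rfl
    have hQ2 : ∑ j, ∑ l, β t z j * β t z l *
          ((∫ ω, X ω j * X ω l ∂(condP z))
            - (∫ ω, X ω j ∂(condP z)) * (∫ ω, X ω l ∂(condP z)))
        = β t z ⬝ᵥ (Smat z *ᵥ β t z) := by
      simp_rw [← hSmat z]
      exact dot_quad _ _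
    rw [hv, hQ1, hQ2]; ring
  have hπt0 : π tt ≠ 0 := ne_of_gt (hπ tt).1
  have hπs0 : π ss ≠ 0 := ne_of_gt (hπ ss).1
  have hπts0 : π tt + π ss ≠ 0 := ne_of_gt (add_pos (hπ tt).1 (hπ ss).1)
  have hstep : ∀ z : 𝓩,
      pz z * (variance (Y tt) (condP z) / π tt + variance (Y ss) (condP z) / π ss)
        - (pz z * (variance (fun ω => Y tt ω - ∑ j, X ω j * β tt z j) (condP z) / π tt
            + variance (fun ω => Y ss ω - ∑ j, X ω j * β ss z j) (condP z) / π ss)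
          + pz z * ((β tt z - β ss z) ⬝ᵥ (Smat z *ᵥ (β tt z - β ss z))))
      = pz z * ((π ss • β tt z + π tt • β ss z) ⬝ᵥ
            (Smat z *ᵥ (π ss • β tt z + π tt • β ss z)))
          / (π tt * π ss * (π tt + π ss))
        + pz z * ((β tt z - β ss z) ⬝ᵥ (Smat z *ᵥ (β tt z - β ss z)))
          * ((π tt + π ss)⁻¹ - 1) := by
    intro z
    rw [key z tt, key z ss]
    have hD : (β tt z - β ss z) ⬝ᵥ (Smat z *ᵥ (β tt z - β ss z))
        = β tt z ⬝ᵥ (Smat z *ᵥ β tt z) - β tt z ⬝ᵥ (Smat z *ᵥ β ss z)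
          - β ss z ⬝ᵥ (Smat z *ᵥ β tt z) + β ss z ⬝ᵥ (Smat z *ᵥ β ss z) := by
      simp only [Matrix.mulVec_sub, sub_dotProduct, dotProduct_sub]
      ring
    have hQQ : (π ss • β tt z + π tt • β ss z) ⬝ᵥ (Smat z *ᵥ (π ss • β tt z + π tt • β ss z))
        = π ss * π ss * (β tt z ⬝ᵥ (Smat z *ᵥ β tt z))
          + π ss * π tt * (β tt z ⬝ᵥ (Smat z *ᵥ β ss z))
          + π tt * π ss * (β ss z ⬝ᵥ (Smat z *ᵥ β tt z))
          + π tt * π tt * (β ss z ⬝ᵥ (Smat z *ᵥ β ss z)) := by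
      simp only [Matrix.mulVec_add, Matrix.mulVec_smul, add_dotProduct,
        dotProduct_add, smul_dotProduct, dotProduct_smul, smul_eq_mul]
      ring
    rw [hD, hQQ]
    field_simp
    ring
  rw [hσU2, hσA2, ← Finset.sum_add_distrib, ← Finset.sum_sub_distrib,
    Finset.sum_div, Finset.sum_mul, ← Finset.sum_add_distrib]
  exact Finset.sum_congr rfl fun z _ => hstep z
end

section
/- σ_B² − σ_A² = E[{β_t(Z) − β(Z)}^T Σ(Z) {β_t(Z) − β(Z)}]/π_t + E[{β_s(Z) − β(Z)}^T Σ(Z) {β_s(Z) − β(Z)}]/π_s − E[{β_t(Z) − β_s(Z)}^T Σ(Z) {β_t(Z) − β_s(Z)}]. -/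
open MeasureTheory ProbabilityTheory Matrix
open scoped ProbabilityTheory

private lemma integrable_mul' {Ω : Type*} [MeasurableSpace Ω] {μ : Measure Ω}
    {f g : Ω → ℝ} (hf : MemLp f 2 μ) (hg : MemLp g 2 μ) :
    Integrable (fun ω => f ω * g ω) μ := by
  have h1 := (hf.add hg).integrable_sq
  have h2 := hf.integrable_sq
  have h3 := hg.integrable_sq
  have h4 := ((h1.sub h2).sub h3).div_const 2
  refine h4.congr (Filter.Eventually.of_forall fun ω => ?_)
  simp only [Pi.sub_apply, Pi.add_apply]
  ring

private lemma sums_algebra {dd : ℕ} (b m C : Fin dd → ℝ) (D : Fin dd → Fin dd → ℝ)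
    (I2 mY : ℝ) :
    (I2 - ∑ j, b j * (2 * C j) + ∑ j, ∑ l, b j * b l * D j l)
        - (mY - ∑ j, b j * m j) ^ 2
      = (I2 - mY ^ 2) - 2 * ∑ j, b j * (C j - m j * mY)
          + ∑ j, ∑ l, b j * b l * (D j l - m j * m l) := by
  have e1 : ∑ j, b j * (2 * C j) = 2 * ∑ j, b j * C j := by
    rw [Finset.mul_sum]; exact Finset.sum_congr rfl fun j _ => by ring
  have e2 : ∑ j, b j * (C j - m j * mY)
      = (∑ j, b j * C j) - mY * ∑ j, b j * m j := by
    rw [Finset.mul_sum, ← Finset.sum_sub_distrib]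
    exact Finset.sum_congr rfl fun j _ => by ring
  have e3 : ∑ j, ∑ l, b j * b l * (D j l - m j * m l)
      = (∑ j, ∑ l, b j * b l * D j l) - ∑ j, ∑ l, b j * m j * b l * m l := by
    rw [← Finset.sum_sub_distrib]
    refine Finset.sum_congr rfl fun j _ => ?_
    rw [← Finset.sum_sub_distrib]
    exact Finset.sum_congr rfl fun l _ => by ring
  have e4 : (∑ j, b j * m j) ^ 2 = ∑ j, ∑ l, b j * m j * b l * m l := by
    rw [sq, Finset.sum_mul_sum]
    exact Finset.sum_congr rfl fun j _ => Finset.sum_congr rfl fun l _ => by ring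
  rw [e1, e2, e3]
  linear_combination -e4

private lemma quad_diff {dd : ℕ} (S : Matrix (Fin dd) (Fin dd) ℝ)
    (hsym : ∀ j l, S j l = S l j) (a b c : Fin dd → ℝ)
    (hc : ∀ j, c j = ∑ l, S j l * a l) :
    (-(2 * ∑ j, b j * c j) + ∑ j, ∑ l, b j * b l * S j l)
        - (-(2 * ∑ j, a j * c j) + ∑ j, ∑ l, a j * a l * S j l)
      = (a - b) ⬝ᵥ (S *ᵥ (a - b)) := by
  have hP : ∑ j, b j * c j = ∑ j, ∑ l, b j * (S j l * a l) := by
    refine Finset.sum_congr rfl fun j _ => ?_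
    rw [hc j, Finset.mul_sum]
  have hQ : ∑ j, a j * c j = ∑ j, ∑ l, a j * (S j l * a l) := by
    refine Finset.sum_congr rfl fun j _ => ?_
    rw [hc j, Finset.mul_sum]
  have hbb : ∑ j, ∑ l, b j * b l * S j l = ∑ j, ∑ l, b j * (S j l * b l) :=
    Finset.sum_congr rfl fun j _ => Finset.sum_congr rfl fun l _ => by ring
  have haa : ∑ j, ∑ l, a j * a l * S j l = ∑ j, ∑ l, a j * (S j l * a l) :=
    Finset.sum_congr rfl fun j _ => Finset.sum_congr rfl fun l _ => by ring
  have hRHS : (a - b) ⬝ᵥ (S *ᵥ (a - b))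
      = ∑ j, ∑ l, (a j * (S j l * a l) - a j * (S j l * b l)
          - b j * (S j l * a l) + b j * (S j l * b l)) := by
    simp only [dotProduct, Matrix.mulVec, Pi.sub_apply]
    refine Finset.sum_congr rfl fun j _ => ?_
    rw [Finset.mul_sum]
    exact Finset.sum_congr rfl fun l _ => by ring
  have hcomm : ∑ j, ∑ l, a j * (S j l * b l) = ∑ j, ∑ l, b j * (S j l * a l) := by
    rw [Finset.sum_comm]
    exact Finset.sum_congr rfl fun j _ => Finset.sum_congr rfl fun l _ => by
      rw [hsym l j]; ring
  have hsplit : ∑ j, ∑ l, (a j * (S j l * a l) - a j * (S j l * b l)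
          - b j * (S j l * a l) + b j * (S j l * b l))
      = (∑ j, ∑ l, a j * (S j l * a l)) - (∑ j, ∑ l, a j * (S j l * b l))
          - (∑ j, ∑ l, b j * (S j l * a l)) + ∑ j, ∑ l, b j * (S j l * b l) := by
    simp only [Finset.sum_add_distrib, Finset.sum_sub_distrib]
  rw [hP, hQ, hbb, haa, hRHS, hsplit, hcomm]
  ring

private lemma var_expand {Ω : Type*} [MeasurableSpace Ω] (μ : Measure Ω)
    [IsProbabilityMeasure μ] {dd : ℕ} (Y : Ω → ℝ) (X : Ω → Fin dd → ℝ)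
    (hY : MemLp Y 2 μ) (hX : ∀ j, MemLp (fun ω => X ω j) 2 μ) (b : Fin dd → ℝ) :
    variance (fun ω => Y ω - ∑ j, X ω j * b j) μ
      = variance Y μ
        - 2 * ∑ j, b j * ((∫ ω, X ω j * Y ω ∂μ)
            - (∫ ω, X ω j ∂μ) * (∫ ω, Y ω ∂μ))
        + ∑ j, ∑ l, b j * b l *
            ((∫ ω, X ω j * X ω l ∂μ) - (∫ ω, X ω j ∂μ) * (∫ ω, X ω l ∂μ)) := by
  have hXb : ∀ j : Fin dd, MemLp (fun ω => X ω j * b j) 2 μ := fun j => by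
    have h0 : (fun ω => X ω j * b j) = fun ω => b j * X ω j :=
      funext fun ω => mul_comm _ _
    rw [h0]; exact (hX j).const_mul (b j)
  have hsum : MemLp (fun ω => ∑ j, X ω j * b j) 2 μ :=
    memLp_finset_sum Finset.univ fun j _ => hXb j
  have hf : MemLp (fun ω => Y ω - ∑ j, X ω j * b j) 2 μ := hY.sub hsum
  have IY := hY.integrable one_le_two
  have IXj : ∀ j, Integrable (fun ω => X ω j) μ := fun j => (hX j).integrable one_le_two
  have IY2 : Integrable (fun ω => Y ω ^ 2) μ := hY.integrable_sq
  have IXY : ∀ j, Integrable (fun ω => X ω j * Y ω) μ := fun j => integrable_mul' (hX j) hY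
  have IXX : ∀ j l, Integrable (fun ω => X ω j * X ω l) μ :=
    fun j l => integrable_mul' (hX j) (hX l)
  have hmean : ∫ ω, (Y ω - ∑ j, X ω j * b j) ∂μ
      = (∫ ω, Y ω ∂μ) - ∑ j, b j * ∫ ω, X ω j ∂μ := by
    rw [integral_sub IY (integrable_finset_sum _ fun j _ => (IXj j).mul_const (b j))]
    congr 1
    rw [integral_finset_sum _ fun j _ => (IXj j).mul_const (b j)]
    exact Finset.sum_congr rfl fun j _ => by rw [integral_mul_const]; ring
  have hsq : (fun ω => (Y ω - ∑ j, X ω j * b j) ^ 2)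
      = fun ω => Y ω ^ 2 - ∑ j, b j * (2 * (X ω j * Y ω))
          + ∑ j, ∑ l, b j * b l * (X ω j * X ω l) := by
    funext ω
    have h1 : ∑ j, b j * (2 * (X ω j * Y ω)) = 2 * ((∑ j, X ω j * b j) * Y ω) := by
      rw [Finset.sum_mul, Finset.mul_sum]
      exact Finset.sum_congr rfl fun j _ => by ring
    have h2 : ∑ j, ∑ l, b j * b l * (X ω j * X ω l)
        = (∑ j, X ω j * b j) * (∑ l, X ω l * b l) := by
      rw [Finset.sum_mul_sum]
      exact Finset.sum_congr rfl fun j _ => Finset.sum_congr rfl fun l _ => by ring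
    rw [h1, h2]; ring
  have I1 : ∀ j, Integrable (fun ω => b j * (2 * (X ω j * Y ω))) μ :=
    fun j => ((IXY j).const_mul 2).const_mul (b j)
  have I2 : ∀ j l, Integrable (fun ω => b j * b l * (X ω j * X ω l)) μ :=
    fun j l => (IXX j l).const_mul _
  have Isum1 : Integrable (fun ω => ∑ j, b j * (2 * (X ω j * Y ω))) μ :=
    integrable_finset_sum _ fun j _ => I1 j
  have Isum2 : Integrable (fun ω => ∑ j, ∑ l, b j * b l * (X ω j * X ω l)) μ :=
    integrable_finset_sum _ fun j _ => integrable_finset_sum _ fun l _ => I2 j l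
  have hint2 : ∫ ω, (Y ω - ∑ j, X ω j * b j) ^ 2 ∂μ
      = (∫ ω, Y ω ^ 2 ∂μ) - ∑ j, b j * (2 * ∫ ω, X ω j * Y ω ∂μ)
          + ∑ j, ∑ l, b j * b l * ∫ ω, X ω j * X ω l ∂μ := by
    have Isub : Integrable (fun ω => Y ω ^ 2 - ∑ j, b j * (2 * (X ω j * Y ω))) μ := by
      exact IY2.sub Isum1
    rw [hsq, integral_add Isub Isum2, integral_sub IY2 Isum1,
        integral_finset_sum _ (fun j _ => I1 j),
        integral_finset_sum _ (fun j _ => integrable_finset_sum _ fun l _ => I2 j l)]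
    congr 1
    · congr 1
      exact Finset.sum_congr rfl fun j _ => by rw [integral_const_mul, integral_const_mul]
    · refine Finset.sum_congr rfl fun j _ => ?_
      rw [integral_finset_sum _ fun l _ => I2 j l]
      exact Finset.sum_congr rfl fun l _ => by rw [integral_const_mul]
  rw [variance_eq_sub hf, variance_eq_sub hY]
  rw [show ((fun ω => Y ω - ∑ j, X ω j * b j) ^ 2)
      = fun ω => (Y ω - ∑ j, X ω j * b j) ^ 2 from rfl]
  rw [show (Y ^ 2) = fun ω => Y ω ^ 2 from rfl]
  rw [hint2, hmean]
  exact sums_algebra b (fun j => ∫ ω, X ω j ∂μ) (fun j => ∫ ω, X ω j * Y ω ∂μ)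
    (fun j l => ∫ ω, X ω j * X ω l ∂μ) (∫ ω, Y ω ^ 2 ∂μ) (∫ ω, Y ω ∂μ)

/-- In the population setup, with `β̄(z) = ∑ ℓ, π ℓ • β ℓ z`,
`σB² − σA² = E[(β_t(Z) − β̄(Z))ᵀ Σ(Z) (β_t(Z) − β̄(Z))]/πt
  + E[(β_s(Z) − β̄(Z))ᵀ Σ(Z) (β_s(Z) − β̄(Z))]/πs
  − E[(β_t(Z) − β_s(Z))ᵀ Σ(Z) (β_t(Z) − β_s(Z))]`. -/
theorem stmt4 {Ω : Type*} [MeasurableSpace Ω] (P : Measure Ω) [IsProbabilityMeasure P]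
    {𝓦 : Type*} [MeasurableSpace 𝓦]
    {𝓩 : Type*} [Fintype 𝓩] [MeasurableSpace 𝓩] [MeasurableSingletonClass 𝓩]
    {k d : ℕ} (hk : 2 ≤ k)
    (π : Fin k → ℝ) (hπ : ∀ t, π t ∈ Set.Ioo (0 : ℝ) 1) (hπsum : ∑ t, π t = 1)
    (Y : Fin k → Ω → ℝ) (W : Ω → 𝓦)
    (hYmeas : ∀ t, Measurable (Y t)) (hWmeas : Measurable W)
    (hY2 : ∀ t, MemLp (Y t) 2 P)
    (g : 𝓦 → 𝓩) (hg : Measurable g)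
    (Z : Ω → 𝓩) (hZdef : ∀ ω, Z ω = g (W ω))
    (hZpos : ∀ z, 0 < P {ω | Z ω = z})
    (h : 𝓦 → Fin d → ℝ) (hh : Measurable h)
    (X : Ω → Fin d → ℝ) (hXdef : ∀ ω, X ω = h (W ω))
    (hX2 : ∀ j, MemLp (fun ω => X ω j) 2 P)
    (hXY2 : ∀ t j, MemLp (fun ω => X ω j * Y t ω) 2 P)
    -- conditional measures and stratum probabilities
    (condP : 𝓩 → Measure Ω) (hcondP : ∀ z, condP z = P[|{ω | Z ω = z}])
    (pz : 𝓩 → ℝ) (hpz : ∀ z, pz z = (P {ω | Z ω = z}).toReal)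
    -- conditional covariance matrices, assumed positive definite
    (Smat : 𝓩 → Matrix (Fin d) (Fin d) ℝ)
    (hSmat : ∀ z j l, Smat z j l
      = ∫ ω, X ω j * X ω l ∂(condP z)
        - (∫ ω, X ω j ∂(condP z)) * (∫ ω, X ω l ∂(condP z)))
    (hSpd : ∀ z, (Smat z).PosDef)
    -- projection coefficients
    (β : Fin k → 𝓩 → Fin d → ℝ)
    (hβ : ∀ t z, β t z = (Smat z)⁻¹ *ᵥ fun j =>
      ∫ ω, X ω j * Y t ω ∂(condP z)
        - (∫ ω, X ω j ∂(condP z)) * (∫ ω, Y t ω ∂(condP z)))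
    (βb : 𝓩 → Fin d → ℝ) (hβb : ∀ z, βb z = ∑ ℓ, π ℓ • β ℓ z)
    -- the two fixed treatments
    (tt ss : Fin k) (hts : tt ≠ ss)
    -- the asymptotic variance components
    (σA2 σB2 : ℝ)
    (hσA2 : σA2
      = (∑ z, pz z *
          (variance (fun ω => Y tt ω - ∑ j, X ω j * β tt z j) (condP z) / π tt
            + variance (fun ω => Y ss ω - ∑ j, X ω j * β ss z j) (condP z) / π ss))
        + ∑ z, pz z *
            ((β tt z - β ss z) ⬝ᵥ (Smat z *ᵥ (β tt z - β ss z))))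
    (hσB2 : σB2 = ∑ z, pz z *
      (variance (fun ω => Y tt ω - ∑ j, X ω j * βb z j) (condP z) / π tt
        + variance (fun ω => Y ss ω - ∑ j, X ω j * βb z j) (condP z) / π ss)) :
    σB2 - σA2
      = (∑ z, pz z * ((β tt z - βb z) ⬝ᵥ (Smat z *ᵥ (β tt z - βb z)))) / π tt
        + (∑ z, pz z * ((β ss z - βb z) ⬝ᵥ (Smat z *ᵥ (β ss z - βb z)))) / π ss
        - ∑ z, pz z * ((β tt z - β ss z) ⬝ᵥ (Smat z *ᵥ (β tt z - β ss z))) := by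
  have hZmeas : Measurable Z := by
    have hze : Z = fun ω => g (W ω) := funext hZdef
    rw [hze]; exact hg.comp hWmeas
  have hprob : ∀ z : 𝓩, IsProbabilityMeasure (condP z) := fun z => by
    rw [hcondP z]
    exact cond_isProbabilityMeasure (hZpos z).ne'
  have hmem : ∀ (z : 𝓩) (f : Ω → ℝ), MemLp f 2 P → MemLp f 2 (condP z) := by
    intro z f hf
    rw [hcondP z, ProbabilityTheory.cond]
    exact (hf.restrict _).smul_measure (ENNReal.inv_ne_top.mpr (hZpos z).ne')
  have hsym : ∀ (z : 𝓩) j l, Smat z j l = Smat z l j := by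
    intro z j l
    have hxe : (fun ω => X ω j * X ω l) = fun ω => X ω l * X ω j :=
      funext fun ω => mul_comm _ _
    rw [hSmat, hSmat, hxe, mul_comm (∫ ω, X ω j ∂(condP z)) _]
  have key : ∀ (z : 𝓩) (t' : Fin k),
      variance (fun ω => Y t' ω - ∑ j, X ω j * βb z j) (condP z)
        = variance (fun ω => Y t' ω - ∑ j, X ω j * β t' z j) (condP z)
          + (β t' z - βb z) ⬝ᵥ (Smat z *ᵥ (β t' z - βb z)) := by
    intro z t'
    haveI := hprob z
    have hYz := hmem z _ (hY2 t')
    have hXz : ∀ j, MemLp (fun ω => X ω j) 2 (condP z) := fun j => hmem z _ (hX2 j)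
    have e1 := var_expand (condP z) (Y t') X hYz hXz (βb z)
    have e2 := var_expand (condP z) (Y t') X hYz hXz (β t' z)
    have hc : ∀ j, (∫ ω, X ω j * Y t' ω ∂(condP z))
          - (∫ ω, X ω j ∂(condP z)) * (∫ ω, Y t' ω ∂(condP z))
        = ∑ l, Smat z j l * β t' z l := by
      intro j
      have h1 : Smat z *ᵥ β t' z = fun j =>
          (∫ ω, X ω j * Y t' ω ∂(condP z))
            - (∫ ω, X ω j ∂(condP z)) * (∫ ω, Y t' ω ∂(condP z)) := by
        rw [hβ t' z, Matrix.mulVec_mulVec,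
          Matrix.mul_nonsing_inv _ (isUnit_iff_ne_zero.mpr (hSpd z).det_pos.ne'),
          Matrix.one_mulVec]
      calc (∫ ω, X ω j * Y t' ω ∂(condP z))
            - (∫ ω, X ω j ∂(condP z)) * (∫ ω, Y t' ω ∂(condP z))
          = (Smat z *ᵥ β t' z) j := (congrFun h1 j).symm
        _ = ∑ l, Smat z j l * β t' z l := by
            simp [Matrix.mulVec, dotProduct]
    have qd := quad_diff (Smat z) (hsym z) (β t' z) (βb z)
      (fun j => (∫ ω, X ω j * Y t' ω ∂(condP z))
        - (∫ ω, X ω j ∂(condP z)) * (∫ ω, Y t' ω ∂(condP z))) hc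
    rw [e1, e2]
    simp only [← hSmat]
    linear_combination qd
  have hπt : π tt ≠ 0 := (hπ tt).1.ne'
  have hπs : π ss ≠ 0 := (hπ ss).1.ne'
  rw [hσB2, hσA2]
  simp only [Finset.sum_div, ← Finset.sum_add_distrib, ← Finset.sum_sub_distrib]
  refine Finset.sum_congr rfl fun z _ => ?_
  rw [key z tt, key z ss]
  field_simp
  ring
end

section
/- Under conditions (C1)–(C3), for every fixed n, almost surely on the event {n_t(z) ≥ 1 and n_s(z) ≥ 1 for all z ∈ 𝒵}, the conditional expectation of θ̂ given the σ-algebra 𝒟_n generated by (Z_1, …, Z_n, I_1, …, I_n) equals ∑_{z∈𝒵} (n(z)/n){E(Y^{(t)} | Z = z) − E(Y^{(s)} | Z = z)}; in particular E[θ̂ | 𝒟_n] is free of the treatment assignments beyond the stratum counts. -/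
open MeasureTheory ProbabilityTheory Filter Finset
open scoped NNReal ProbabilityTheory Topology


/-- Conditional expectation with respect to the σ-algebra generated by a finite-valued map. -/
lemma condexp_comap_finite {Ω α : Type*} [m0 : MeasurableSpace Ω] (P : Measure Ω)
    [IsProbabilityMeasure P] [Fintype α] [mα : MeasurableSpace α] [MeasurableSingletonClass α]
    {X : Ω → α} (hX : Measurable X) {f : Ω → ℝ} (hf : Integrable f P) :
    MeasureTheory.condExp (MeasurableSpace.comap X mα) P f
      =ᵐ[P] fun ω => (∫ x in X ⁻¹' {X ω}, f x ∂P) / (P (X ⁻¹' {X ω})).toReal := by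
  classical
  set Φ : α → ℝ := fun c => (∫ x in X ⁻¹' {c}, f x ∂P) / (P (X ⁻¹' {c})).toReal with hΦ
  have hm : MeasurableSpace.comap X mα ≤ m0 := hX.comap_le
  have hatom : ∀ c : α, MeasurableSet (X ⁻¹' {c}) := fun c => hX (measurableSet_singleton c)
  -- each atom integral of the candidate
  have hatomint : ∀ c : α, ∫ x in X ⁻¹' {c}, Φ (X x) ∂P = ∫ x in X ⁻¹' {c}, f x ∂P := by
    intro c
    have hcongr : ∫ x in X ⁻¹' {c}, Φ (X x) ∂P = ∫ _x in X ⁻¹' {c}, Φ c ∂P := by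
      refine setIntegral_congr_fun (hatom c) ?_
      intro x hx
      simp only [Set.mem_preimage, Set.mem_singleton_iff] at hx
      simp [hx]
    rw [hcongr, setIntegral_const, smul_eq_mul]
    by_cases hz : P (X ⁻¹' {c}) = 0
    · rw [Measure.restrict_eq_zero.mpr hz, integral_zero_measure]
      simp [hz, Measure.real]
    · rw [hΦ]
      field_simp [ENNReal.toReal_ne_zero, hz, measure_ne_top P _]
      exact mul_comm _ _
  have hint : Integrable (fun ω => Φ (X ω)) P := by
    have : (fun ω => Φ (X ω))
        = fun ω => ∑ c : α, Set.indicator (X ⁻¹' {c}) (fun _ => Φ c) ω := by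
      funext ω
      rw [Finset.sum_eq_single (X ω)]
      · simp [Set.indicator_apply]
      · intro b _ hb
        rw [Set.indicator_of_notMem]
        simp only [Set.mem_preimage, Set.mem_singleton_iff]
        exact fun h => hb h.symm
      · simp
    rw [this]
    refine integrable_finset_sum _ (fun c _ => ?_)
    exact (integrable_const (Φ c)).indicator (hatom c)
  refine (ae_eq_condExp_of_forall_setIntegral_eq hm hf
    (fun s _ _ => hint.integrableOn) ?_ ?_).symm
  · -- set integral equality
    rintro s ⟨u, -, rfl⟩ -
    have hdecomp : X ⁻¹' u = ⋃ c ∈ (Finset.univ.filter (fun c : α => c ∈ u)),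
        X ⁻¹' {c} := by
      ext x
      simp only [Set.mem_preimage, Set.mem_iUnion, Finset.mem_filter, Finset.mem_univ,
        true_and, Set.mem_singleton_iff]
      constructor
      · intro h; exact ⟨X x, h, rfl⟩
      · rintro ⟨c, hc, rfl⟩; exact hc
    rw [hdecomp, integral_biUnion_finset _ (fun c _ => hatom c) ?dis
        (fun c _ => hint.integrableOn),
      integral_biUnion_finset _ (fun c _ => hatom c) ?dis (fun c _ => hf.integrableOn)]
    · exact Finset.sum_congr rfl (fun c _ => hatomint c)
    case dis =>
      intro c _ d _ hcd
      refine Set.disjoint_left.mpr ?_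
      intro x hx hx'
      simp only [Set.mem_preimage, Set.mem_singleton_iff] at hx hx'
      exact hcd (hx ▸ hx'.symm ▸ rfl)
  · -- measurability of the candidate wrt the comap σ-algebra
    refine StronglyMeasurable.aestronglyMeasurable ?_
    refine Measurable.stronglyMeasurable ?_
    intro s _
    exact ⟨Φ ⁻¹' s, (Set.toFinite _).measurableSet, rfl⟩


lemma comap_prod_mk_discrete {Ω β γ : Type*} [mβ : MeasurableSpace β] [Countable β]
    [MeasurableSingletonClass β] [mγ : MeasurableSpace γ] [Countable γ]
    [MeasurableSingletonClass γ] (f : Ω → β) (g : Ω → γ) :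
    MeasurableSpace.comap (fun ω => (f ω, g ω)) inferInstance
      = MeasurableSpace.comap f mβ ⊔ MeasurableSpace.comap g mγ := by
  apply le_antisymm
  · rintro s ⟨u, -, rfl⟩
    have : (fun ω => (f ω, g ω)) ⁻¹' u
        = ⋃ c ∈ u, (f ⁻¹' {c.1} ∩ g ⁻¹' {c.2}) := by
      ext ω
      simp only [Set.mem_preimage, Set.mem_iUnion, Set.mem_inter_iff, Set.mem_singleton_iff]
      constructor
      · intro h; exact ⟨(f ω, g ω), h, rfl, rfl⟩
      · rintro ⟨⟨a, b⟩, hc, h1, h2⟩; simpa [h1, h2] using hc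
    rw [this]
    refine MeasurableSet.biUnion (Set.to_countable u) (fun c _ => ?_)
    refine MeasurableSet.inter ?_ ?_
    · exact (le_sup_left (α := MeasurableSpace Ω)) _ ⟨{c.1}, measurableSet_singleton _, rfl⟩
    · exact (le_sup_right (α := MeasurableSpace Ω)) _ ⟨{c.2}, measurableSet_singleton _, rfl⟩
  · refine sup_le ?_ ?_
    · have h1 : MeasurableSpace.comap f mβ
          = MeasurableSpace.comap (fun ω => (f ω, g ω))
            (MeasurableSpace.comap (fun p : β × γ => p.1) mβ) :=
        (MeasurableSpace.comap_comp (m := mβ) (f := fun p : β × γ => p.1)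
          (g := fun ω => (f ω, g ω))).symm
      exact h1.trans_le (MeasurableSpace.comap_mono measurable_fst.comap_le)
    · have h1 : MeasurableSpace.comap g mγ
          = MeasurableSpace.comap (fun ω => (f ω, g ω))
            (MeasurableSpace.comap (fun p : β × γ => p.2) mγ) :=
        (MeasurableSpace.comap_comp (m := mγ) (f := fun p : β × γ => p.2)
          (g := fun ω => (f ω, g ω))).symm
      exact h1.trans_le (MeasurableSpace.comap_mono measurable_snd.comap_le)

lemma iSup_comap_range_eq_comap_tuple {Ω β : Type*} [mβ : MeasurableSpace β] [Countable β]
    [MeasurableSingletonClass β] (n : ℕ) (V : ℕ → Ω → β) :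
    (⨆ i ∈ Finset.range n, MeasurableSpace.comap (V i) mβ)
      = MeasurableSpace.comap (fun ω (i : Fin n) => V i ω) MeasurableSpace.pi := by
  apply le_antisymm
  · refine iSup₂_le (fun i hi => ?_)
    rw [Finset.mem_range] at hi
    have h1 : MeasurableSpace.comap (V i) mβ
        = MeasurableSpace.comap (fun ω (j : Fin n) => V j ω)
          (MeasurableSpace.comap (fun p : Fin n → β => p ⟨i, hi⟩) mβ) :=
      (MeasurableSpace.comap_comp (m := mβ) (f := fun p : Fin n → β => p ⟨i, hi⟩)
        (g := fun ω (j : Fin n) => V j ω)).symm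
    exact h1.trans_le (MeasurableSpace.comap_mono (measurable_pi_apply _).comap_le)
  · rintro s ⟨u, -, rfl⟩
    have : (fun ω (i : Fin n) => V i ω) ⁻¹' u
        = ⋃ c ∈ u, ⋂ i : Fin n, (V i) ⁻¹' {c i} := by
      ext ω
      simp only [Set.mem_preimage, Set.mem_iUnion, Set.mem_iInter, Set.mem_singleton_iff]
      constructor
      · intro h; exact ⟨_, h, fun i => rfl⟩
      · rintro ⟨c, hc, h1⟩
        have : (fun i : Fin n => V i ω) = c := funext h1
        rwa [this]
    rw [this]
    refine MeasurableSet.biUnion (Set.to_countable u) (fun c _ => ?_)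
    refine MeasurableSet.iInter (fun i => ?_)
    have hle : MeasurableSpace.comap (V i) mβ
        ≤ ⨆ j ∈ Finset.range n, MeasurableSpace.comap (V j) mβ := by
      refine le_iSup₂ (f := fun j (_ : j ∈ Finset.range n) => MeasurableSpace.comap (V j) mβ)
        i.val ?_
      simpa using i.isLt
    exact hle _ ⟨{c i}, measurableSet_singleton _, rfl⟩


lemma int_mul_of_ae_bound {Ω : Type*} [m0 : MeasurableSpace Ω] {P : Measure Ω}
    [IsProbabilityMeasure P] {ψ φ : Ω → ℝ} (hψ : AEStronglyMeasurable ψ P)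
    (hψb : ∀ᵐ ω ∂P, ‖ψ ω‖ ≤ 1) (hφ : Integrable φ P) :
    Integrable (fun ω => ψ ω * φ ω) P := by
  refine Integrable.mono' hφ.norm (hψ.mul hφ.aestronglyMeasurable) ?_
  filter_upwards [hψb] with ω hω
  rw [norm_mul]
  calc ‖ψ ω‖ * ‖φ ω‖ ≤ 1 * ‖φ ω‖ :=
    mul_le_mul_of_nonneg_right hω (norm_nonneg _)
  _ = ‖φ ω‖ := one_mul _

/-- Extension of set-level conditional independence to integrable functions. -/
lemma ciext {Ω : Type*} (𝒢 σI σYW : MeasurableSpace Ω) [m0 : MeasurableSpace Ω]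
    (P : Measure Ω) [IsProbabilityMeasure P]
    (h𝒢le : 𝒢 ≤ m0) (hIle : σI ≤ m0) (hYWle : σYW ≤ m0)
    (hC2 : ∀ (A B : Set Ω), MeasurableSet[σI] A → MeasurableSet[σYW] B →
        MeasureTheory.condExp 𝒢 P ((A ∩ B).indicator fun _ => (1 : ℝ))
          =ᵐ[P] fun ω => MeasureTheory.condExp 𝒢 P (A.indicator fun _ => (1 : ℝ)) ω
              * MeasureTheory.condExp 𝒢 P (B.indicator fun _ => (1 : ℝ)) ω)
    (A : Set Ω) (hA : MeasurableSet[σI] A)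
    {f : Ω → ℝ} (hfm : StronglyMeasurable[σYW] f) (hf : Integrable f P) :
    ∫ ω, A.indicator (fun _ => (1:ℝ)) ω * f ω ∂P
      = ∫ ω, MeasureTheory.condExp 𝒢 P (A.indicator fun _ => (1 : ℝ)) ω * f ω ∂P := by
  classical
  set E : Ω → ℝ := MeasureTheory.condExp 𝒢 P (A.indicator fun _ => (1 : ℝ)) with hE
  have hAm0 : MeasurableSet A := hIle A hA
  have hIndA : Integrable (A.indicator fun _ => (1:ℝ)) P :=
    (integrable_const (1:ℝ)).indicator hAm0
  have hEsm : StronglyMeasurable E := stronglyMeasurable_condExp.mono h𝒢le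
  have hE0 : 0 ≤ᵐ[P] E :=
    condExp_nonneg (Filter.Eventually.of_forall fun ω =>
      Set.indicator_nonneg (fun _ _ => zero_le_one) ω)
  have hE1 : E ≤ᵐ[P] fun _ => (1:ℝ) := by
    have h := condExp_mono (μ := P) (m := 𝒢) hIndA (integrable_const (1:ℝ))
      (Filter.Eventually.of_forall fun ω => Set.indicator_le_self' (fun _ _ => zero_le_one) ω)
    rwa [condExp_const h𝒢le] at h
  have hEbd : ∀ᵐ ω ∂P, ‖E ω‖ ≤ 1 := by
    filter_upwards [hE0, hE1] with ω h0 h1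
    rw [Real.norm_eq_abs, abs_of_nonneg h0]; exact h1
  have hAbd : ∀ᵐ ω ∂P, ‖A.indicator (fun _ => (1:ℝ)) ω‖ ≤ 1 :=
    Filter.Eventually.of_forall fun ω => by
      rw [Real.norm_eq_abs]
      rcases Set.indicator_eq_zero_or_self A (fun _ => (1:ℝ)) ω with h | h <;> simp [h]
  have hAsm : AEStronglyMeasurable (A.indicator fun _ => (1:ℝ)) P :=
    (stronglyMeasurable_const.indicator hAm0).aestronglyMeasurable
  -- base case : indicators of σYW-measurable sets
  have base : ∀ (B : Set Ω), MeasurableSet[σYW] B →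
      ∫ ω, A.indicator (fun _ => (1:ℝ)) ω * B.indicator (fun _ => (1:ℝ)) ω ∂P
        = ∫ ω, E ω * B.indicator (fun _ => (1:ℝ)) ω ∂P := by
    intro B hB
    have hBm0 : MeasurableSet B := hYWle B hB
    have hIndB : Integrable (B.indicator fun _ => (1:ℝ)) P :=
      (integrable_const (1:ℝ)).indicator hBm0
    have hprod : ∀ ω, A.indicator (fun _ => (1:ℝ)) ω * B.indicator (fun _ => (1:ℝ)) ω
        = (A ∩ B).indicator (fun _ => (1:ℝ)) ω := by
      intro ω
      by_cases hω : ω ∈ A ∩ B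
      · rw [Set.indicator_of_mem hω, Set.indicator_of_mem hω.1, Set.indicator_of_mem hω.2]
        norm_num
      · rw [Set.indicator_of_notMem hω]
        rcases (not_and_or.mp hω : ω ∉ A ∨ ω ∉ B) with h | h
        · rw [Set.indicator_of_notMem h, zero_mul]
        · rw [Set.indicator_of_notMem h, mul_zero]
    have hEB : Integrable (fun ω => E ω * B.indicator (fun _ => (1:ℝ)) ω) P :=
      int_mul_of_ae_bound hEsm.aestronglyMeasurable hEbd hIndB
    have hpull : MeasureTheory.condExp 𝒢 P
          (fun ω => E ω * B.indicator (fun _ => (1:ℝ)) ω)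
        =ᵐ[P] fun ω => E ω * MeasureTheory.condExp 𝒢 P (B.indicator fun _ => (1:ℝ)) ω :=
      condExp_mul_of_stronglyMeasurable_left (μ := P) (m := 𝒢)
        (f := E) (g := B.indicator fun _ => (1:ℝ)) stronglyMeasurable_condExp hEB hIndB
    calc ∫ ω, A.indicator (fun _ => (1:ℝ)) ω * B.indicator (fun _ => (1:ℝ)) ω ∂P
        = ∫ ω, (A ∩ B).indicator (fun _ => (1:ℝ)) ω ∂P :=
          integral_congr_ae (Filter.Eventually.of_forall hprod)
      _ = ∫ ω, MeasureTheory.condExp 𝒢 P ((A ∩ B).indicator fun _ => (1:ℝ)) ω ∂P :=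
          (integral_condExp h𝒢le).symm
      _ = ∫ ω, E ω * MeasureTheory.condExp 𝒢 P (B.indicator fun _ => (1:ℝ)) ω ∂P :=
          integral_congr_ae (hC2 A B hA hB)
      _ = ∫ ω, MeasureTheory.condExp 𝒢 P
            (fun ω => E ω * B.indicator (fun _ => (1:ℝ)) ω) ω ∂P :=
          (integral_congr_ae hpull).symm
      _ = ∫ ω, E ω * B.indicator (fun _ => (1:ℝ)) ω ∂P := integral_condExp h𝒢le
  -- simple functions wrt σYW
  have hsimple : ∀ q : @SimpleFunc Ω σYW ℝ,
      ∫ ω, A.indicator (fun _ => (1:ℝ)) ω * q ω ∂P = ∫ ω, E ω * q ω ∂P := by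
    intro q
    refine @SimpleFunc.induction Ω ℝ σYW _
      (fun q => ∫ ω, A.indicator (fun _ => (1:ℝ)) ω * q ω ∂P = ∫ ω, E ω * q ω ∂P)
      ?_ ?_ q
    · intro c B hB
      have h1 : ∀ ψ : Ω → ℝ,
          ∫ ω, ψ ω * (B.piecewise (Function.const Ω c) (Function.const Ω 0)) ω ∂P
            = c * ∫ ω, ψ ω * B.indicator (fun _ => (1:ℝ)) ω ∂P := by
        intro ψ
        rw [← integral_const_mul]
        congr 1; funext ω
        by_cases hω : ω ∈ B <;>
          simp [Set.piecewise, hω, Set.indicator_of_mem, Set.indicator_of_notMem] <;> ring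
      simp only [SimpleFunc.coe_piecewise, SimpleFunc.coe_const]
      rw [h1, h1, base B hB]
    · intro q r _ hq hr
      have hqsm : StronglyMeasurable (⇑q) := (SimpleFunc.stronglyMeasurable q).mono hYWle
      have hrsm : StronglyMeasurable (⇑r) := (SimpleFunc.stronglyMeasurable r).mono hYWle
      obtain ⟨Cq, hCq⟩ := @MeasureTheory.SimpleFunc.exists_forall_norm_le Ω ℝ σYW _ q
      obtain ⟨Cr, hCr⟩ := @MeasureTheory.SimpleFunc.exists_forall_norm_le Ω ℝ σYW _ r
      have hqint : Integrable (⇑q) P :=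
        Integrable.mono' (integrable_const Cq) hqsm.aestronglyMeasurable
          (Filter.Eventually.of_forall fun ω => by simpa using hCq ω)
      have hrint : Integrable (⇑r) P :=
        Integrable.mono' (integrable_const Cr) hrsm.aestronglyMeasurable
          (Filter.Eventually.of_forall fun ω => by simpa using hCr ω)
      have e1 : ∀ (ψ : Ω → ℝ), (fun ω => ψ ω * (q + r) ω)
          = fun ω => ψ ω * q ω + ψ ω * r ω := by
        intro ψ; funext ω; simp [mul_add]
      rw [e1, e1,
        integral_add (int_mul_of_ae_bound hAsm hAbd hqint)
          (int_mul_of_ae_bound hAsm hAbd hrint),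
        integral_add (int_mul_of_ae_bound hEsm.aestronglyMeasurable hEbd hqint)
          (int_mul_of_ae_bound hEsm.aestronglyMeasurable hEbd hrint),
        hq, hr]
  -- bounded σYW-strongly-measurable functions
  have hbounded : ∀ (φ : Ω → ℝ) (c : ℝ), 0 ≤ c → StronglyMeasurable[σYW] φ →
      (∀ ω, ‖φ ω‖ ≤ c) →
      ∫ ω, A.indicator (fun _ => (1:ℝ)) ω * φ ω ∂P = ∫ ω, E ω * φ ω ∂P := by
    intro φ c hc hφm hφb
    set s : ℕ → @SimpleFunc Ω σYW ℝ := hφm.approxBounded c with hs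
    have hconv : ∀ ω, Tendsto (fun k => s k ω) atTop (𝓝 (φ ω)) :=
      fun ω => hφm.tendsto_approxBounded_of_norm_le (hφb ω)
    have hsb : ∀ k ω, ‖s k ω‖ ≤ c := fun k ω => hφm.norm_approxBounded_le hc k ω
    have hssm : ∀ k, StronglyMeasurable (⇑(s k)) :=
      fun k => ((s k).stronglyMeasurable).mono hYWle
    have t1 : Tendsto (fun k => ∫ ω, A.indicator (fun _ => (1:ℝ)) ω * s k ω ∂P) atTop
        (𝓝 (∫ ω, A.indicator (fun _ => (1:ℝ)) ω * φ ω ∂P)) := by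
      refine tendsto_integral_of_dominated_convergence (fun _ => c)
        (fun k => hAsm.mul (hssm k).aestronglyMeasurable) (integrable_const c) ?_ ?_
      · intro k
        filter_upwards [hAbd] with ω h1
        rw [norm_mul]
        calc ‖A.indicator (fun _ => (1:ℝ)) ω‖ * ‖s k ω‖ ≤ 1 * c :=
          mul_le_mul h1 (hsb k ω) (norm_nonneg _) zero_le_one
        _ = c := one_mul c
      · exact Filter.Eventually.of_forall fun ω => (hconv ω).const_mul _
    have t2 : Tendsto (fun k => ∫ ω, E ω * s k ω ∂P) atTop
        (𝓝 (∫ ω, E ω * φ ω ∂P)) := by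
      refine tendsto_integral_of_dominated_convergence (fun _ => c)
        (fun k => hEsm.aestronglyMeasurable.mul (hssm k).aestronglyMeasurable)
        (integrable_const c) ?_ ?_
      · intro k
        filter_upwards [hEbd] with ω h1
        rw [norm_mul]
        calc ‖E ω‖ * ‖s k ω‖ ≤ 1 * c :=
          mul_le_mul h1 (hsb k ω) (norm_nonneg _) zero_le_one
        _ = c := one_mul c
      · exact Filter.Eventually.of_forall fun ω => (hconv ω).const_mul _
    have heq : ∀ k, ∫ ω, A.indicator (fun _ => (1:ℝ)) ω * s k ω ∂P
        = ∫ ω, E ω * s k ω ∂P := fun k => hsimple (s k)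
    exact tendsto_nhds_unique (by simpa only [heq] using t1) t2
  -- general integrable f via truncation
  have hSmeas : ∀ M : ℕ, MeasurableSet[σYW] {ω | ‖f ω‖ ≤ (M:ℝ)} := by
    intro M
    have hnm : Measurable[σYW] fun ω => ‖f ω‖ := hfm.norm.measurable
    exact hnm measurableSet_Iic
  set fM : ℕ → Ω → ℝ := fun M => Set.indicator {ω | ‖f ω‖ ≤ (M:ℝ)} f with hfM
  have hfMsm : ∀ M, StronglyMeasurable[σYW] (fM M) := fun M => hfm.indicator (hSmeas M)
  have hfMb : ∀ M ω, ‖fM M ω‖ ≤ (M:ℝ) := by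
    intro M ω
    by_cases hω : ω ∈ {ω | ‖f ω‖ ≤ (M:ℝ)}
    · show ‖Set.indicator {ω | ‖f ω‖ ≤ (M:ℝ)} f ω‖ ≤ (M:ℝ)
      rw [Set.indicator_of_mem hω]; exact hω
    · show ‖Set.indicator {ω | ‖f ω‖ ≤ (M:ℝ)} f ω‖ ≤ (M:ℝ)
      rw [Set.indicator_of_notMem hω]; simp
  have hfMle : ∀ M ω, ‖fM M ω‖ ≤ ‖f ω‖ := by
    intro M ω
    by_cases hω : ω ∈ {ω | ‖f ω‖ ≤ (M:ℝ)}
    · show ‖Set.indicator {ω | ‖f ω‖ ≤ (M:ℝ)} f ω‖ ≤ ‖f ω‖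
      rw [Set.indicator_of_mem hω]
    · show ‖Set.indicator {ω | ‖f ω‖ ≤ (M:ℝ)} f ω‖ ≤ ‖f ω‖
      rw [Set.indicator_of_notMem hω]; simp
  have hfMconv : ∀ ω, Tendsto (fun M => fM M ω) atTop (𝓝 (f ω)) := by
    intro ω
    refine tendsto_atTop_of_eventually_const (i₀ := ⌈‖f ω‖⌉₊) ?_
    intro M hM
    have hω : ω ∈ {ω | ‖f ω‖ ≤ (M:ℝ)} := by
      simp only [Set.mem_setOf_eq]
      exact le_trans (Nat.le_ceil _) (by exact_mod_cast hM)
    show Set.indicator {ω | ‖f ω‖ ≤ (M:ℝ)} f ω = f ω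
    rw [Set.indicator_of_mem hω]
  have hfMsm0 : ∀ M, StronglyMeasurable (fM M) := fun M => (hfMsm M).mono hYWle
  have t1 : Tendsto (fun M => ∫ ω, A.indicator (fun _ => (1:ℝ)) ω * fM M ω ∂P) atTop
      (𝓝 (∫ ω, A.indicator (fun _ => (1:ℝ)) ω * f ω ∂P)) := by
    refine tendsto_integral_of_dominated_convergence (fun ω => ‖f ω‖)
      (fun M => hAsm.mul (hfMsm0 M).aestronglyMeasurable) hf.norm ?_ ?_
    · intro M
      filter_upwards [hAbd] with ω h1
      rw [norm_mul]
      calc ‖A.indicator (fun _ => (1:ℝ)) ω‖ * ‖fM M ω‖ ≤ 1 * ‖f ω‖ :=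
        mul_le_mul h1 (hfMle M ω) (norm_nonneg _) zero_le_one
      _ = ‖f ω‖ := one_mul _
    · exact Filter.Eventually.of_forall fun ω => (hfMconv ω).const_mul _
  have t2 : Tendsto (fun M => ∫ ω, E ω * fM M ω ∂P) atTop
      (𝓝 (∫ ω, E ω * f ω ∂P)) := by
    refine tendsto_integral_of_dominated_convergence (fun ω => ‖f ω‖)
      (fun M => hEsm.aestronglyMeasurable.mul (hfMsm0 M).aestronglyMeasurable) hf.norm ?_ ?_
    · intro M
      filter_upwards [hEbd] with ω h1
      rw [norm_mul]
      calc ‖E ω‖ * ‖fM M ω‖ ≤ 1 * ‖f ω‖ :=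
        mul_le_mul h1 (hfMle M ω) (norm_nonneg _) zero_le_one
      _ = ‖f ω‖ := one_mul _
    · exact Filter.Eventually.of_forall fun ω => (hfMconv ω).const_mul _
  have heq : ∀ M : ℕ, ∫ ω, A.indicator (fun _ => (1:ℝ)) ω * fM M ω ∂P
      = ∫ ω, E ω * fM M ω ∂P :=
    fun M => hbounded (fM M) M (Nat.cast_nonneg M) (hfMsm M) (hfMb M)
  exact tendsto_nhds_unique (by simpa only [heq] using t1) t2


lemma ae_atom_ne_zero {Ω α : Type*} [m0 : MeasurableSpace Ω] (P : Measure Ω)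
    [IsProbabilityMeasure P] [Fintype α] [mα : MeasurableSpace α] [MeasurableSingletonClass α]
    {X : Ω → α} (hX : Measurable X) : ∀ᵐ ω ∂P, P (X ⁻¹' {X ω}) ≠ 0 := by
  rw [ae_iff]
  have h : {ω | ¬ P (X ⁻¹' {X ω}) ≠ 0} ⊆ ⋃ c ∈ {c : α | P (X ⁻¹' {c}) = 0}, X ⁻¹' {c} := by
    intro ω hω
    simp only [Set.mem_setOf_eq, not_not] at hω
    exact Set.mem_biUnion hω rfl
  refine measure_mono_null h ?_
  exact (measure_biUnion_null_iff (Set.to_countable _)).mpr (fun c hc => hc)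


/-- Under (C1)–(C3), for every fixed `n`, almost surely on the event that
every stratum contains at least one patient in each of the arms `t` and `s`, the conditional
expectation of `θ̂` given `𝒟ₙ = σ(Z₁,…,Zₙ,I₁,…,Iₙ)` equals
`∑_z (n(z)/n) (E(Y⁽ᵗ⁾ | Z = z) − E(Y⁽ˢ⁾ | Z = z))`. -/
theorem stmt12 {Ω : Type*} [MeasurableSpace Ω] (P : Measure Ω) [IsProbabilityMeasure P]
    {𝓦 : Type*} [MeasurableSpace 𝓦]
    {𝓩 : Type*} [Fintype 𝓩] [DecidableEq 𝓩] [MeasurableSpace 𝓩] [MeasurableSingletonClass 𝓩]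
    {k : ℕ} (hk : 2 ≤ k)
    (π : Fin k → ℝ) (hπ : ∀ t, π t ∈ Set.Ioo (0 : ℝ) 1) (hπsum : ∑ t, π t = 1)
    -- (C1): the i.i.d. sequence and its population version
    (Y : ℕ → Fin k → Ω → ℝ) (W : ℕ → Ω → 𝓦)
    (Ypop : Fin k → Ω → ℝ) (Wpop : Ω → 𝓦)
    (hYmeas : ∀ i t, Measurable (Y i t)) (hWmeas : ∀ i, Measurable (W i))
    (hYpopmeas : ∀ t, Measurable (Ypop t)) (hWpopmeas : Measurable Wpop)
    (hident : ∀ i, Measure.map (fun ω => ((fun t => Y i t ω), W i ω)) P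
        = Measure.map (fun ω => ((fun t => Ypop t ω), Wpop ω)) P)
    (hindep : iIndepFun
        (fun i ω => ((fun t => Y i t ω), W i ω)) P)
    (hY2 : ∀ t, MemLp (Ypop t) 2 P)
    -- strata
    (g : 𝓦 → 𝓩) (hg : Measurable g)
    (Z : ℕ → Ω → 𝓩) (hZdef : ∀ i ω, Z i ω = g (W i ω))
    (Zpop : Ω → 𝓩) (hZpopdef : ∀ ω, Zpop ω = g (Wpop ω))
    (hZpos : ∀ z, 0 < P {ω | Zpop ω = z})
    -- treatment assignments and observed responses
    (I : ℕ → Ω → Fin k) (hImeas : ∀ i, Measurable (I i))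
    (Yobs : ℕ → Ω → ℝ) (hYobs : ∀ i ω, Yobs i ω = Y i (I i ω) ω)
    -- stratum/treatment counts
    (Nz : ℕ → 𝓩 → Ω → ℕ)
    (hNz : ∀ n z ω, Nz n z ω = ((range n).filter fun i => Z i ω = z).card)
    (Ntz : ℕ → Fin k → 𝓩 → Ω → ℕ)
    (hNtz : ∀ n t z ω,
      Ntz n t z ω = ((range n).filter fun i => I i ω = t ∧ Z i ω = z).card)
    -- σ-algebras generated by the strata, the assignments, and the raw data
    (𝒢 σI σYW : ℕ → MeasurableSpace Ω)
    (h𝒢 : ∀ n, 𝒢 n = ⨆ i ∈ range n, MeasurableSpace.comap (Z i) inferInstance)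
    (hσI : ∀ n, σI n = ⨆ i ∈ range n, MeasurableSpace.comap (I i) inferInstance)
    (hσYW : ∀ n, σYW n = ⨆ i ∈ range n,
        MeasurableSpace.comap (fun ω => ((fun t => Y i t ω), W i ω)) inferInstance)
    -- (C2): conditional independence of assignments and data given the strata
    (hC2 : ∀ n (A B : Set Ω), MeasurableSet[σI n] A → MeasurableSet[σYW n] B →
        MeasureTheory.condExp (𝒢 n) P ((A ∩ B).indicator fun _ => (1 : ℝ))
          =ᵐ[P] fun ω =>
            MeasureTheory.condExp (𝒢 n) P (A.indicator fun _ => (1 : ℝ)) ω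
              * MeasureTheory.condExp (𝒢 n) P (B.indicator fun _ => (1 : ℝ)) ω)
    -- (C3): conditional assignment probabilities and vanishing relative imbalance
    (hC3a : ∀ n, ∀ i < n, ∀ t,
        MeasureTheory.condExp (𝒢 n) P ({ω | I i ω = t}.indicator fun _ => (1 : ℝ))
          =ᵐ[P] fun _ => π t)
    -- the two fixed treatments and the average treatment effect
    (tt ss : Fin k) (hts : tt ≠ ss)
    (θ : ℝ) (hθ : θ = ∫ ω, (Ypop tt ω - Ypop ss ω) ∂P)
    -- stratified sample means and the stratified estimator
    (Ybar : ℕ → Fin k → 𝓩 → Ω → ℝ)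
    (hYbar : ∀ n t z ω, Ybar n t z ω
      = (∑ i ∈ range n, if I i ω = t ∧ Z i ω = z then Yobs i ω else 0)
          / (Ntz n t z ω : ℝ))
    (θhat : ℕ → Ω → ℝ)
    (hθhat : ∀ n ω, θhat n ω
      = ∑ z, ((Nz n z ω : ℝ) / (n : ℝ)) * (Ybar n tt z ω - Ybar n ss z ω))
    -- the σ-algebra generated by strata and assignments
    (𝒟 : ℕ → MeasurableSpace Ω) (h𝒟 : ∀ n, 𝒟 n = 𝒢 n ⊔ σI n) :
    ∀ n : ℕ, ∀ᵐ ω ∂P,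
      (∀ z, 1 ≤ Ntz n tt z ω ∧ 1 ≤ Ntz n ss z ω) →
        MeasureTheory.condExp (𝒟 n) P (θhat n) ω
          = ∑ z, ((Nz n z ω : ℝ) / (n : ℝ)) *
              ((∫ ω', Ypop tt ω' ∂(P[|{ω' | Zpop ω' = z}]))
                - ∫ ω', Ypop ss ω' ∂(P[|{ω' | Zpop ω' = z}])) := by
  classical
  intro n
  -- basic measurability
  have hZm : ∀ i, Measurable (Z i) := by
    intro i
    have h : Z i = g ∘ W i := funext (hZdef i)
    rw [h]; exact hg.comp (hWmeas i)
  have hZpopm : Measurable Zpop := by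
    have h : Zpop = g ∘ Wpop := funext hZpopdef
    rw [h]; exact hg.comp hWpopmeas
  set F : ℕ → Ω → (Fin k → ℝ) × 𝓦 := fun i ω => ((fun t => Y i t ω), W i ω) with hFdef
  have hFm : ∀ i, Measurable (F i) :=
    fun i => Measurable.prodMk (measurable_pi_lambda _ (hYmeas i)) (hWmeas i)
  set Fpop : Ω → (Fin k → ℝ) × 𝓦 := fun ω => ((fun t => Ypop t ω), Wpop ω) with hFpopdef
  have hFpopm : Measurable Fpop :=
    Measurable.prodMk (measurable_pi_lambda _ hYpopmeas) hWpopmeas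
  set m : Fin k → 𝓩 → ℝ := fun t z => ∫ ω', Ypop t ω' ∂(P[|{ω' | Zpop ω' = z}]) with hmdef
  have hHt : ∀ t : Fin k, Measurable (fun p : (Fin k → ℝ) × 𝓦 => p.1 t) :=
    fun t => (measurable_pi_apply t).comp measurable_fst
  have hmeasS : ∀ z, MeasurableSet {p : (Fin k → ℝ) × 𝓦 | g p.2 = z} :=
    fun z => (hg.comp measurable_snd) (measurableSet_singleton z)
  have hidentF : ∀ i, Measure.map (F i) P = Measure.map Fpop P := by
    intro i
    simp only [hFdef, hFpopdef]
    exact hident i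
  have htrans : ∀ (i : ℕ) (H : (Fin k → ℝ) × 𝓦 → ℝ), Measurable H →
      ∫ ω, H (F i ω) ∂P = ∫ ω, H (Fpop ω) ∂P := by
    intro i H hH
    rw [← integral_map (hFm i).aemeasurable hH.aestronglyMeasurable, hidentF i,
      integral_map hFpopm.aemeasurable hH.aestronglyMeasurable]
  have hPZ : ∀ i z, P {ω | Z i ω = z} = P {ω | Zpop ω = z} := by
    intro i z
    have h1 : {ω | Z i ω = z} = F i ⁻¹' {p : (Fin k → ℝ) × 𝓦 | g p.2 = z} := by
      ext ω
      simp only [Set.mem_setOf_eq, Set.mem_preimage, hFdef, hZdef]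
    have h2 : {ω | Zpop ω = z} = Fpop ⁻¹' {p : (Fin k → ℝ) × 𝓦 | g p.2 = z} := by
      ext ω
      simp only [Set.mem_setOf_eq, Set.mem_preimage, hFpopdef, hZpopdef]
    rw [h1, h2, ← Measure.map_apply (hFm i) (hmeasS z), hidentF i,
      Measure.map_apply hFpopm (hmeasS z)]
  have hYpopint : ∀ t, Integrable (Ypop t) P := fun t => (hY2 t).integrable one_le_two
  have hYint : ∀ i t, Integrable (Y i t) P := by
    intro i t
    have h1 : Integrable (fun p : (Fin k → ℝ) × 𝓦 => p.1 t) (Measure.map Fpop P) := by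
      rw [integrable_map_measure (hHt t).aestronglyMeasurable hFpopm.aemeasurable]
      exact hYpopint t
    rw [← hidentF i, integrable_map_measure (hHt t).aestronglyMeasurable
      (hFm i).aemeasurable] at h1
    exact h1
  have hsetZmeas : ∀ i z, MeasurableSet {ω | Z i ω = z} :=
    fun i z => (hZm i) (measurableSet_singleton z)
  have hsetZpopmeas : ∀ z, MeasurableSet {ω | Zpop ω = z} :=
    fun z => hZpopm (measurableSet_singleton z)
  have hsetint : ∀ (i : ℕ) (t : Fin k) z,
      ∫ ω in {ω | Z i ω = z}, Y i t ω ∂P = ∫ ω in {ω | Zpop ω = z}, Ypop t ω ∂P := by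
    intro i t z
    have hH : Measurable (Set.indicator {p : (Fin k → ℝ) × 𝓦 | g p.2 = z}
        (fun q => q.1 t)) := (hHt t).indicator (hmeasS z)
    have h := htrans i _ hH
    have e1 : (fun ω => Set.indicator {p : (Fin k → ℝ) × 𝓦 | g p.2 = z}
        (fun q => q.1 t) (F i ω)) = Set.indicator {ω | Z i ω = z} (Y i t) := by
      funext ω
      rw [Set.indicator_apply, Set.indicator_apply]
      simp only [Set.mem_setOf_eq, hFdef, hZdef]
    have e2 : (fun ω => Set.indicator {p : (Fin k → ℝ) × 𝓦 | g p.2 = z}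
        (fun q => q.1 t) (Fpop ω)) = Set.indicator {ω | Zpop ω = z} (Ypop t) := by
      funext ω
      rw [Set.indicator_apply, Set.indicator_apply]
      simp only [Set.mem_setOf_eq, hFpopdef, hZpopdef]
    rw [e1, e2, integral_indicator (hsetZmeas i z), integral_indicator (hsetZpopmeas z)] at h
    exact h
  have hmz : ∀ (t : Fin k) z,
      m t z * (P {ω | Zpop ω = z}).toReal = ∫ ω in {ω | Zpop ω = z}, Ypop t ω ∂P := by
    intro t z
    have hPz0 : P {ω | Zpop ω = z} ≠ 0 := (hZpos z).ne'
    have hPzt : (P {ω | Zpop ω = z}).toReal ≠ 0 :=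
      ENNReal.toReal_ne_zero.mpr ⟨hPz0, measure_ne_top P _⟩
    simp only [hmdef]
    rw [ProbabilityTheory.cond, integral_smul_measure, smul_eq_mul, ENNReal.toReal_inv]
    field_simp
  -- the σ-algebras as comaps of finite-valued maps
  set ZV : Ω → (Fin n → 𝓩) := fun ω j => Z j ω with hZVdef
  set IV : Ω → (Fin n → Fin k) := fun ω j => I j ω with hIVdef
  set X : Ω → (Fin n → 𝓩) × (Fin n → Fin k) := fun ω => (ZV ω, IV ω) with hXdef
  have hZVm : Measurable ZV := measurable_pi_lambda _ (fun j => hZm j)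
  have hIVm : Measurable IV := measurable_pi_lambda _ (fun j => hImeas j)
  have hXm : Measurable X := hZVm.prodMk hIVm
  have h𝒢n : 𝒢 n = MeasurableSpace.comap ZV MeasurableSpace.pi := by
    rw [h𝒢 n, iSup_comap_range_eq_comap_tuple n Z, hZVdef]
  have hσIn : σI n = MeasurableSpace.comap IV MeasurableSpace.pi := by
    rw [hσI n, iSup_comap_range_eq_comap_tuple n I, hIVdef]
  have h𝒟n : 𝒟 n = MeasurableSpace.comap X inferInstance := by
    rw [h𝒟 n, h𝒢n, hσIn, ← comap_prod_mk_discrete ZV IV, hXdef]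
  have h𝒢le : 𝒢 n ≤ ‹MeasurableSpace Ω› := by rw [h𝒢n]; exact hZVm.comap_le
  have hσIle : σI n ≤ ‹MeasurableSpace Ω› := by rw [hσIn]; exact hIVm.comap_le
  have h𝒟le : 𝒟 n ≤ ‹MeasurableSpace Ω› := by rw [h𝒟n]; exact hXm.comap_le
  have hσYWle : σYW n ≤ ‹MeasurableSpace Ω› := by
    rw [hσYW n]
    refine iSup₂_le fun i _ => ?_
    exact Measurable.comap_le (by simpa only [hFdef] using hFm i)
  have hcomapFle : ∀ i, i ∈ range n → MeasurableSpace.comap (F i) inferInstance ≤ σYW n := by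
    intro i hi
    rw [hσYW n]
    refine le_trans (le_of_eq ?_) (le_iSup₂
      (f := fun i (_ : i ∈ range n) => MeasurableSpace.comap
        (fun ω => ((fun t => Y i t ω), W i ω)) inferInstance) i hi)
    simp only [hFdef]
  have h𝒢YW : 𝒢 n ≤ σYW n := by
    rw [h𝒢 n]
    refine iSup₂_le fun i hi => ?_
    have h1 : MeasurableSpace.comap (Z i) inferInstance
        = MeasurableSpace.comap (F i) (MeasurableSpace.comap
          (fun p : (Fin k → ℝ) × 𝓦 => g p.2) inferInstance) := by
      rw [show Z i = (fun p : (Fin k → ℝ) × 𝓦 => g p.2) ∘ (F i) from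
        funext fun ω => by simp only [hFdef]; exact hZdef i ω]
      exact (MeasurableSpace.comap_comp
        (f := fun p : (Fin k → ℝ) × 𝓦 => g p.2) (g := F i)).symm
    rw [h1]
    exact le_trans (MeasurableSpace.comap_mono (hg.comp measurable_snd).comap_le)
      (hcomapFle i hi)
  have hYsm : ∀ i, i ∈ range n → ∀ t, StronglyMeasurable[σYW n] (Y i t) := by
    intro i hi t
    have h1 : Measurable[MeasurableSpace.comap (F i) inferInstance] (Y i t) := by
      intro s hs
      refine ⟨(fun p : (Fin k → ℝ) × 𝓦 => p.1 t) ⁻¹' s, (hHt t) hs, ?_⟩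
      ext ω
      simp only [Set.mem_preimage, hFdef]
    exact (h1.mono (hcomapFle i hi) le_rfl).stronglyMeasurable
  have hatomZ : ∀ v : Fin n → 𝓩, MeasurableSet[𝒢 n] (ZV ⁻¹' {v}) := by
    intro v; rw [h𝒢n]; exact ⟨{v}, measurableSet_singleton v, rfl⟩
  have hatomZm : ∀ v : Fin n → 𝓩, MeasurableSet (ZV ⁻¹' {v}) :=
    fun v => hZVm (measurableSet_singleton v)
  -- the key computation on atoms
  have hK : ∀ (i : ℕ) (hin : i < n) (t : Fin k) (v : Fin n → 𝓩) (A : Set Ω),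
      MeasurableSet[σI n] A →
      ∫ x in A ∩ ZV ⁻¹' {v}, Y i t x ∂P
        = m t (v ⟨i, hin⟩) * (P (A ∩ ZV ⁻¹' {v})).toReal := by
    intro i hin t v A hA
    set i' : Fin n := ⟨i, hin⟩ with hi'def
    set B : Set Ω := ZV ⁻¹' {v} with hBdef
    have hBm : MeasurableSet B := hatomZm v
    have hAm : MeasurableSet A := hσIle A hA
    set s₀ : Set Ω := {ω | Z i ω = v i'} with hs₀def
    have hs₀m : MeasurableSet s₀ := hsetZmeas i (v i')
    set C : Set Ω := {ω | ∀ j (hj : j ∈ (range n).erase i),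
        Z j ω = v ⟨j, mem_range.mp (mem_of_mem_erase hj)⟩} with hCdef
    have hCm : MeasurableSet C := by
      have hCeq : C = ⋂ (j : ((range n).erase i : Finset ℕ)),
          {ω | Z j.val ω = v ⟨j.val, mem_range.mp (mem_of_mem_erase j.property)⟩} := by
        ext ω
        simp only [hCdef, Set.mem_setOf_eq, Set.mem_iInter, Subtype.forall]
      rw [hCeq]
      exact MeasurableSet.iInter fun j => hsetZmeas _ _
    have hBsplit : B = s₀ ∩ C := by
      ext ω
      simp only [hBdef, Set.mem_preimage, Set.mem_singleton_iff, Set.mem_inter_iff,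
        hs₀def, hCdef, Set.mem_setOf_eq, funext_iff, hZVdef]
      constructor
      · intro h
        exact ⟨h i', fun j hj => h ⟨j, mem_range.mp (mem_of_mem_erase hj)⟩⟩
      · rintro ⟨h1, h2⟩ j
        by_cases hji : j = i'
        · rw [hji]; exact h1
        · have hjmem : (j : ℕ) ∈ (range n).erase i := by
            refine Finset.mem_erase.mpr ⟨?_, Finset.mem_range.mpr j.isLt⟩
            intro hc
            exact hji (Fin.ext hc)
          have h3 := h2 j hjmem
          have h4 : (⟨(j : ℕ), mem_range.mp (mem_of_mem_erase hjmem)⟩ : Fin n) = j :=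
            Fin.ext rfl
          rwa [h4] at h3
    -- independence of the two blocks
    have hii : i ∈ ({i} : Finset ℕ) := Finset.mem_singleton_self i
    have hdisj : Disjoint ({i} : Finset ℕ) ((range n).erase i) := by
      simp [Finset.disjoint_singleton_left]
    have hindepF : iIndepFun F P := by
      simpa only [hFdef] using hindep
    have hIF := hindepF.indepFun_finset ({i} : Finset ℕ) ((range n).erase i) hdisj hFm
    set ψ : ((((range n).erase i : Finset ℕ)) → (Fin k → ℝ) × 𝓦) → ℝ :=
      Set.indicator {q | ∀ j : (((range n).erase i : Finset ℕ)),
          g (q j).2 = v ⟨j.val, mem_range.mp (mem_of_mem_erase j.property)⟩}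
        (fun _ => (1:ℝ)) with hψdef
    have hψsetm : MeasurableSet {q : ((((range n).erase i : Finset ℕ)) → (Fin k → ℝ) × 𝓦) |
        ∀ j, g (q j).2 = v ⟨j.val, mem_range.mp (mem_of_mem_erase j.property)⟩} := by
      have hqeq : {q : ((((range n).erase i : Finset ℕ)) → (Fin k → ℝ) × 𝓦) |
          ∀ j, g (q j).2 = v ⟨j.val, mem_range.mp (mem_of_mem_erase j.property)⟩}
          = ⋂ j, (fun q : ((((range n).erase i : Finset ℕ)) → (Fin k → ℝ) × 𝓦) => g (q j).2)
              ⁻¹' {v ⟨j.val, mem_range.mp (mem_of_mem_erase j.property)⟩} := by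
        ext q
        simp only [Set.mem_setOf_eq, Set.mem_iInter, Set.mem_preimage, Set.mem_singleton_iff]
      rw [hqeq]
      exact MeasurableSet.iInter fun j =>
        ((hg.comp measurable_snd).comp (measurable_pi_apply j)) (measurableSet_singleton _)
    have hψm : Measurable ψ := measurable_const.indicator hψsetm
    have hV : (ψ ∘ fun a (j : (((range n).erase i : Finset ℕ))) => F (j : ℕ) a)
        = C.indicator (fun _ => (1:ℝ)) := by
      funext a
      simp only [hψdef, Function.comp_apply]
      have hmem : ((fun j : (((range n).erase i : Finset ℕ)) => F (j : ℕ) a) ∈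
          {q | ∀ j : (((range n).erase i : Finset ℕ)),
            g (q j).2 = v ⟨j.val, mem_range.mp (mem_of_mem_erase j.property)⟩}) ↔ a ∈ C := by
        simp only [Set.mem_setOf_eq, hCdef, Subtype.forall]
        constructor
        · intro h j hj
          have := h j hj
          rwa [show g ((F j a).2) = Z j a from by
            simp only [hFdef]; exact (hZdef j a).symm] at this
        · intro h j hj
          have := h j hj
          rwa [show g ((F j a).2) = Z j a from by
            simp only [hFdef]; exact (hZdef j a).symm]
      by_cases hc : a ∈ C
      · rw [Set.indicator_of_mem (hmem.mpr hc), Set.indicator_of_mem hc]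
      · rw [Set.indicator_of_notMem (fun hmem' => hc (hmem.mp hmem')),
          Set.indicator_of_notMem hc]
    -- generic product computation for the two indicator blocks
    have hprodgen : ∀ (u : Ω → ℝ), Integrable u P →
        (∀ (φ : (({i} : Finset ℕ) → (Fin k → ℝ) × 𝓦) → ℝ), Measurable φ →
          (φ ∘ fun a (j : ({i} : Finset ℕ)) => F (j : ℕ) a) = s₀.indicator u →
        ∫ a in s₀ ∩ C, u a ∂P = (∫ a in s₀, u a ∂P) * (P C).toReal) := by
      intro u hu φ hφm hU
      have hUV : IndepFun (s₀.indicator u) (C.indicator fun _ => (1:ℝ)) P := by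
        have hcomp := hIF.comp hφm hψm
        rwa [hU, hV] at hcomp
      have hUint : Integrable (s₀.indicator u) P := hu.indicator hs₀m
      have hVint : Integrable (C.indicator fun _ => (1:ℝ)) P :=
        (integrable_const _).indicator hCm
      have hmul := hUV.integral_mul_eq_mul_integral hUint.aestronglyMeasurable hVint.aestronglyMeasurable
      have e1 : (s₀.indicator u * C.indicator fun _ => (1:ℝ))
          = (s₀ ∩ C).indicator u := by
        funext a
        simp only [Pi.mul_apply]
        by_cases h1 : a ∈ s₀ <;> by_cases h2 : a ∈ C <;>
          simp [Set.indicator_apply, h1, h2, Set.mem_inter_iff]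
      rw [e1, integral_indicator (hs₀m.inter hCm), integral_indicator hs₀m,
        integral_indicator hCm, setIntegral_const, smul_eq_mul, mul_one] at hmul
      exact hmul
    have hint_s₀ : ∫ x in s₀, Y i t x ∂P = m t (v i') * (P s₀).toReal := by
      calc ∫ x in s₀, Y i t x ∂P
          = ∫ x in {ω | Zpop ω = v i'}, Ypop t x ∂P := hsetint i t (v i')
        _ = m t (v i') * (P {ω | Zpop ω = v i'}).toReal := (hmz t (v i')).symm
        _ = m t (v i') * (P s₀).toReal := by rw [hs₀def, hPZ i (v i')]
    have hU1 : ((fun p : (({i} : Finset ℕ) → (Fin k → ℝ) × 𝓦) =>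
        Set.indicator {q : (Fin k → ℝ) × 𝓦 | g q.2 = v i'} (fun q => q.1 t) (p ⟨i, hii⟩))
          ∘ fun a (j : ({i} : Finset ℕ)) => F (j : ℕ) a) = s₀.indicator (Y i t) := by
      funext a
      simp only [Function.comp_apply]
      have h2 : g ((F i a).2) = Z i a := by
        simp only [hFdef]; exact (hZdef i a).symm
      by_cases hc : a ∈ s₀
      · rw [Set.indicator_of_mem (show F i a ∈ {q : (Fin k → ℝ) × 𝓦 | g q.2 = v i'} from by
            rw [Set.mem_setOf_eq, h2]; exact hc),
          Set.indicator_of_mem hc]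
      · rw [Set.indicator_of_notMem (show F i a ∉ {q : (Fin k → ℝ) × 𝓦 | g q.2 = v i'} from by
            rw [Set.mem_setOf_eq, h2]; exact hc),
          Set.indicator_of_notMem hc]
    have hU2 : ((fun p : (({i} : Finset ℕ) → (Fin k → ℝ) × 𝓦) =>
        Set.indicator {q : (Fin k → ℝ) × 𝓦 | g q.2 = v i'} (fun _ => (1:ℝ)) (p ⟨i, hii⟩))
          ∘ fun a (j : ({i} : Finset ℕ)) => F (j : ℕ) a) = s₀.indicator (fun _ => (1:ℝ)) := by
      funext a
      simp only [Function.comp_apply]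
      have h2 : g ((F i a).2) = Z i a := by
        simp only [hFdef]; exact (hZdef i a).symm
      by_cases hc : a ∈ s₀
      · rw [Set.indicator_of_mem (show F i a ∈ {q : (Fin k → ℝ) × 𝓦 | g q.2 = v i'} from by
            rw [Set.mem_setOf_eq, h2]; exact hc),
          Set.indicator_of_mem hc]
      · rw [Set.indicator_of_notMem (show F i a ∉ {q : (Fin k → ℝ) × 𝓦 | g q.2 = v i'} from by
            rw [Set.mem_setOf_eq, h2]; exact hc),
          Set.indicator_of_notMem hc]
    have hBint : ∫ x in B, Y i t x ∂P = m t (v i') * (P B).toReal := by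
      have h5 := hprodgen (Y i t) (hYint i t) _
        (((hHt t).indicator (hmeasS (v i'))).comp (measurable_pi_apply _)) hU1
      have h6 := hprodgen (fun _ => (1:ℝ)) (integrable_const _) _
        ((measurable_const.indicator (hmeasS (v i'))).comp (measurable_pi_apply _)) hU2
      simp only [setIntegral_const, smul_eq_mul, mul_one] at h6
      rw [hBsplit, h5, hint_s₀]
      have hPm : (P (s₀ ∩ C)).toReal = (P s₀).toReal * (P C).toReal := h6
      rw [hPm]
      ring
    -- conditional independence step
    set f₀ : Ω → ℝ := B.indicator (Y i t) with hf₀def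
    have hf₀sm : StronglyMeasurable[σYW n] f₀ :=
      (hYsm i (mem_range.mpr hin) t).indicator (h𝒢YW _ (hatomZ v))
    have hf₀int : Integrable f₀ P := (hYint i t).indicator hBm
    have hEq := ciext (𝒢 n) (σI n) (σYW n) P h𝒢le hσIle hσYWle (hC2 n) A hA hf₀sm hf₀int
    have hL : ∫ x, A.indicator (fun _ => (1:ℝ)) x * f₀ x ∂P = ∫ x in A ∩ B, Y i t x ∂P := by
      rw [← integral_indicator (hAm.inter hBm)]
      congr 1; funext x
      by_cases h1 : x ∈ A <;> by_cases h2 : x ∈ B <;>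
        simp [hf₀def, Set.indicator_apply, h1, h2, Set.mem_inter_iff]
    by_cases hPB : P B = 0
    · have h1 : P (A ∩ B) = 0 := measure_mono_null Set.inter_subset_right hPB
      rw [Measure.restrict_eq_zero.mpr h1, integral_zero_measure, h1]
      simp
    · have hEatom := condexp_comap_finite P hZVm ((integrable_const (1:ℝ)).indicator hAm)
      rw [← h𝒢n] at hEatom
      have hR : ∫ x, MeasureTheory.condExp (𝒢 n) P (A.indicator fun _ => (1:ℝ)) x * f₀ x ∂P
          = ((P (A ∩ B)).toReal / (P B).toReal) * (m t (v i') * (P B).toReal) := by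
        have h1 : ∫ x, MeasureTheory.condExp (𝒢 n) P (A.indicator fun _ => (1:ℝ)) x * f₀ x ∂P
            = ∫ x, (∫ y in ZV ⁻¹' {ZV x}, A.indicator (fun _ => (1:ℝ)) y ∂P)
                / (P (ZV ⁻¹' {ZV x})).toReal * f₀ x ∂P := by
          refine integral_congr_ae ?_
          filter_upwards [hEatom] with x hx
          rw [hx]
        have h2 : ∫ x, (∫ y in ZV ⁻¹' {ZV x}, A.indicator (fun _ => (1:ℝ)) y ∂P)
              / (P (ZV ⁻¹' {ZV x})).toReal * f₀ x ∂P
            = ∫ x in B, (∫ y in ZV ⁻¹' {ZV x}, A.indicator (fun _ => (1:ℝ)) y ∂P)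
              / (P (ZV ⁻¹' {ZV x})).toReal * Y i t x ∂P := by
          rw [← integral_indicator hBm]
          congr 1; funext x
          by_cases h2 : x ∈ B <;> simp [hf₀def, Set.indicator_apply, h2]
        have h3 : ∫ x in B, (∫ y in ZV ⁻¹' {ZV x}, A.indicator (fun _ => (1:ℝ)) y ∂P)
              / (P (ZV ⁻¹' {ZV x})).toReal * Y i t x ∂P
            = ((∫ y in B, A.indicator (fun _ => (1:ℝ)) y ∂P) / (P B).toReal)
              * ∫ x in B, Y i t x ∂P := by
          rw [← integral_const_mul]
          refine setIntegral_congr_fun hBm ?_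
          intro x hx
          have hZVx : ZV x = v := by
            rw [hBdef] at hx
            simpa using hx
          simp only [hZVx]
          rfl
        have h4 : ∫ y in B, A.indicator (fun _ => (1:ℝ)) y ∂P = (P (A ∩ B)).toReal := by
          rw [setIntegral_indicator hAm, setIntegral_const, smul_eq_mul, mul_one,
            Set.inter_comm]
          rfl
        rw [h1, h2, h3, h4, hBint]
      have h7 : ∫ x in A ∩ B, Y i t x ∂P
          = ((P (A ∩ B)).toReal / (P B).toReal) * (m t (v i') * (P B).toReal) := by
        rw [← hL, hEq, hR]
      rw [h7]
      have hPBt : (P B).toReal ≠ 0 := ENNReal.toReal_ne_zero.mpr ⟨hPB, measure_ne_top P _⟩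
      field_simp
  -- measurability of the estimator
  have hYobsm : ∀ i, Measurable (Yobs i) := by
    intro i
    have h : Yobs i = fun ω => ∑ t : Fin k, if I i ω = t then Y i t ω else 0 := by
      funext ω
      rw [hYobs i ω]
      symm
      rw [Finset.sum_ite_eq]
      simp
    rw [h]
    exact Finset.measurable_sum _ (fun t _ => Measurable.ite
      ((hImeas i) (measurableSet_singleton t)) (hYmeas i t) measurable_const)
  have hNzm : ∀ z, Measurable (fun ω => (Nz n z ω : ℝ)) := by
    intro z
    have h : (fun ω => (Nz n z ω : ℝ))
        = fun ω => ∑ i ∈ range n, if Z i ω = z then (1:ℝ) else 0 := by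
      funext ω
      rw [hNz, Finset.card_filter, Nat.cast_sum]
      exact Finset.sum_congr rfl fun i _ => by split <;> simp
    rw [h]
    exact Finset.measurable_sum _ fun i _ => Measurable.ite
      ((hZm i) (measurableSet_singleton z)) measurable_const measurable_const
  have hNtzm : ∀ (t : Fin k) z, Measurable (fun ω => (Ntz n t z ω : ℝ)) := by
    intro t z
    have h : (fun ω => (Ntz n t z ω : ℝ))
        = fun ω => ∑ i ∈ range n, if I i ω = t ∧ Z i ω = z then (1:ℝ) else 0 := by
      funext ω
      rw [hNtz, Finset.card_filter, Nat.cast_sum]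
      exact Finset.sum_congr rfl fun i _ => by split <;> simp
    rw [h]
    exact Finset.measurable_sum _ fun i _ => Measurable.ite
      (((hImeas i) (measurableSet_singleton t)).inter ((hZm i) (measurableSet_singleton z)))
      measurable_const measurable_const
  have hYbarm : ∀ (t : Fin k) z, Measurable (Ybar n t z) := by
    intro t z
    have h : Ybar n t z = fun ω => (∑ i ∈ range n,
        if I i ω = t ∧ Z i ω = z then Yobs i ω else 0) / (Ntz n t z ω : ℝ) :=
      funext fun ω => hYbar n t z ω
    rw [h]
    refine Measurable.div ?_ (hNtzm t z)
    exact Finset.measurable_sum _ fun i _ => Measurable.ite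
      (((hImeas i) (measurableSet_singleton t)).inter ((hZm i) (measurableSet_singleton z)))
      (hYobsm i) measurable_const
  have hθmeas : Measurable (θhat n) := by
    have h : θhat n = fun ω => ∑ z, ((Nz n z ω : ℝ)/(n:ℝ))
        * (Ybar n tt z ω - Ybar n ss z ω) := funext fun ω => hθhat n ω
    rw [h]
    exact Finset.measurable_sum _ fun z _ =>
      (((hNzm z).div measurable_const).mul ((hYbarm tt z).sub (hYbarm ss z)))
  have hθint : Integrable (θhat n) P := by
    refine Integrable.mono' (g := fun ω => ∑ i ∈ range n, (‖Y i tt ω‖ + ‖Y i ss ω‖))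
      (integrable_finset_sum _ fun i _ => ((hYint i tt).norm.add (hYint i ss).norm))
      hθmeas.aestronglyMeasurable ?_
    refine Filter.Eventually.of_forall fun ω => ?_
    rw [hθhat]
    have hcoef : ∀ z, |(Nz n z ω : ℝ)/(n:ℝ)| ≤ 1 := by
      intro z
      rcases Nat.eq_zero_or_pos n with h0 | hpos
      · subst h0
        rw [hNz]
        simp
      · rw [abs_of_nonneg (by positivity), div_le_one (by exact_mod_cast hpos)]
        have : Nz n z ω ≤ n := by
          rw [hNz]
          exact (Finset.card_filter_le _ _).trans (le_of_eq (Finset.card_range n))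
        exact_mod_cast this
    set T : Fin k → 𝓩 → ℝ :=
      fun t z => ∑ i ∈ range n, if I i ω = t ∧ Z i ω = z then ‖Y i t ω‖ else 0 with hTdef
    have hTnonneg : ∀ (t : Fin k) z, 0 ≤ T t z := by
      intro t z
      refine Finset.sum_nonneg fun i _ => ?_
      by_cases h : I i ω = t ∧ Z i ω = z <;> simp [h, norm_nonneg]
    have hYbarb : ∀ (t : Fin k) z, |Ybar n t z ω| ≤ T t z := by
      intro t z
      rw [hYbar]
      rcases Nat.eq_zero_or_pos (Ntz n t z ω) with h0 | hpos
      · have hS : (∑ i ∈ range n, if I i ω = t ∧ Z i ω = z then Yobs i ω else 0) = 0 := by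
          refine Finset.sum_eq_zero fun i hi => ?_
          have hfe : (range n).filter (fun i => I i ω = t ∧ Z i ω = z) = ∅ :=
            Finset.card_eq_zero.mp (by rw [← hNtz]; exact h0)
          have hnc : ¬ (I i ω = t ∧ Z i ω = z) := by
            intro hc
            have hmem : i ∈ (range n).filter (fun i => I i ω = t ∧ Z i ω = z) :=
              Finset.mem_filter.mpr ⟨hi, hc⟩
            rw [hfe] at hmem
            exact absurd hmem (Finset.notMem_empty i)
          rw [if_neg hnc]
        rw [hS, h0]
        simpa using hTnonneg t z
      · have h2 : |∑ i ∈ range n, if I i ω = t ∧ Z i ω = z then Yobs i ω else 0| ≤ T t z := by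
          refine (Finset.abs_sum_le_sum_abs _ _).trans ?_
          refine Finset.sum_le_sum fun i _ => ?_
          by_cases hc : I i ω = t ∧ Z i ω = z
          · rw [if_pos hc, if_pos hc, hYobs, hc.1]
            exact le_of_eq (Real.norm_eq_abs _).symm
          · rw [if_neg hc, if_neg hc, abs_zero]
        have h1 : |(∑ i ∈ range n, if I i ω = t ∧ Z i ω = z then Yobs i ω else 0)
            / (Ntz n t z ω : ℝ)|
            = |∑ i ∈ range n, if I i ω = t ∧ Z i ω = z then Yobs i ω else 0|
              / (Ntz n t z ω : ℝ) := by
          rw [abs_div, abs_of_nonneg (by positivity : (0:ℝ) ≤ (Ntz n t z ω : ℝ))]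
        rw [h1]
        exact le_trans (div_le_self (abs_nonneg _) (by exact_mod_cast hpos)) h2
    have hTsum : ∀ t : Fin k, ∑ z, T t z ≤ ∑ i ∈ range n, ‖Y i t ω‖ := by
      intro t
      rw [Finset.sum_comm]
      refine Finset.sum_le_sum fun i _ => ?_
      have h : (∑ z, if I i ω = t ∧ Z i ω = z then ‖Y i t ω‖ else 0)
          = if I i ω = t then ‖Y i t ω‖ else 0 := by
        by_cases hI : I i ω = t
        · simp only [hI, true_and]
          rw [Finset.sum_ite_eq]
          simp
        · simp [hI]
      rw [h]
      split <;> simp [norm_nonneg]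
    calc ‖∑ z, ((Nz n z ω : ℝ)/(n:ℝ)) * (Ybar n tt z ω - Ybar n ss z ω)‖
        ≤ ∑ z, ‖((Nz n z ω : ℝ)/(n:ℝ)) * (Ybar n tt z ω - Ybar n ss z ω)‖ :=
          norm_sum_le _ _
      _ ≤ ∑ z, (T tt z + T ss z) := by
          refine Finset.sum_le_sum fun z _ => ?_
          rw [norm_mul]
          calc ‖(Nz n z ω : ℝ)/(n:ℝ)‖ * ‖Ybar n tt z ω - Ybar n ss z ω‖
              ≤ 1 * (T tt z + T ss z) := by
                refine mul_le_mul (by rw [Real.norm_eq_abs]; exact hcoef z) ?_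
                  (norm_nonneg _) zero_le_one
                refine (norm_sub_le _ _).trans ?_
                exact add_le_add (by rw [Real.norm_eq_abs]; exact hYbarb tt z)
                  (by rw [Real.norm_eq_abs]; exact hYbarb ss z)
            _ = T tt z + T ss z := one_mul _
      _ ≤ ∑ i ∈ range n, (‖Y i tt ω‖ + ‖Y i ss ω‖) := by
          rw [Finset.sum_add_distrib, Finset.sum_add_distrib]
          exact add_le_add (hTsum tt) (hTsum ss)
  -- the atomic formula for the conditional expectation
  have hcf := condexp_comap_finite P hXm hθint
  rw [← h𝒟n] at hcf
  have hnull := ae_atom_ne_zero P hXm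
  filter_upwards [hcf, hnull] with ω hω hωpos
  intro hev
  rw [hω]
  show (∫ x in X ⁻¹' {X ω}, θhat n x ∂P) / (P (X ⁻¹' {X ω})).toReal
      = ∑ z, ((Nz n z ω : ℝ) / (n : ℝ)) *
          ((∫ ω', Ypop tt ω' ∂(P[|{ω' | Zpop ω' = z}]))
            - ∫ ω', Ypop ss ω' ∂(P[|{ω' | Zpop ω' = z}]))
  set S : Set Ω := (IV ⁻¹' {IV ω}) ∩ (ZV ⁻¹' {ZV ω}) with hSdef
  have hXatom : X ⁻¹' {X ω} = S := by
    ext x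
    simp only [hSdef, Set.mem_preimage, Set.mem_singleton_iff, Set.mem_inter_iff, hXdef,
      Prod.ext_iff]
    exact and_comm
  have hAσ : MeasurableSet[σI n] (IV ⁻¹' {IV ω}) := by
    rw [hσIn]; exact ⟨{IV ω}, measurableSet_singleton _, rfl⟩
  have hAm' : MeasurableSet (IV ⁻¹' {IV ω}) := hIVm (measurableSet_singleton _)
  have hSm : MeasurableSet S := hAm'.inter (hatomZm (ZV ω))
  have hPS : P S ≠ 0 := by rw [← hXatom]; exact hωpos
  rw [hXatom]
  have hPSt : (P S).toReal ≠ 0 := ENNReal.toReal_ne_zero.mpr ⟨hPS, measure_ne_top P _⟩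
  -- θhat coincides on S with a fixed linear combination of the Y's
  have hxprops : ∀ x ∈ S, (∀ j, j < n → Z j x = Z j ω) ∧ (∀ j, j < n → I j x = I j ω) := by
    intro x hx
    obtain ⟨hxI, hxZ⟩ := hx
    constructor
    · intro j hj
      exact congrFun (show ZV x = ZV ω by simpa using hxZ) ⟨j, hj⟩
    · intro j hj
      exact congrFun (show IV x = IV ω by simpa using hxI) ⟨j, hj⟩
  have hGc : ∀ x ∈ S, θhat n x = ∑ z, ((Nz n z ω : ℝ)/(n:ℝ)) *
      ((∑ j ∈ range n, if I j ω = tt ∧ Z j ω = z then Y j tt x else 0)/(Ntz n tt z ω : ℝ)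
       - (∑ j ∈ range n, if I j ω = ss ∧ Z j ω = z then Y j ss x else 0)
          /(Ntz n ss z ω : ℝ)) := by
    intro x hx
    obtain ⟨hZx, hIx⟩ := hxprops x hx
    rw [hθhat]
    refine Finset.sum_congr rfl fun z _ => ?_
    have hNzeq : Nz n z x = Nz n z ω := by
      rw [hNz, hNz]
      congr 1
      apply Finset.filter_congr
      intro j hj
      rw [hZx j (mem_range.mp hj)]
    have hYbareq : ∀ t : Fin k, Ybar n t z x
        = (∑ j ∈ range n, if I j ω = t ∧ Z j ω = z then Y j t x else 0)
          /(Ntz n t z ω : ℝ) := by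
      intro t
      have hNtzeq : Ntz n t z x = Ntz n t z ω := by
        rw [hNtz, hNtz]
        congr 1
        apply Finset.filter_congr
        intro j hj
        rw [hZx j (mem_range.mp hj), hIx j (mem_range.mp hj)]
      rw [hYbar, hNtzeq]
      congr 1
      refine Finset.sum_congr rfl fun j hj => ?_
      rw [hYobs j x, hIx j (mem_range.mp hj), hZx j (mem_range.mp hj)]
      by_cases hc : I j ω = t ∧ Z j ω = z
      · rw [if_pos hc, if_pos hc, hc.1]
      · rw [if_neg hc, if_neg hc]
    rw [hNzeq, hYbareq tt, hYbareq ss]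
  rw [setIntegral_congr_fun hSm hGc]
  -- integrability of the pieces
  have hsum_intOn : ∀ (t : Fin k) z, Integrable (fun x => ∑ j ∈ range n,
      if I j ω = t ∧ Z j ω = z then Y j t x else 0) (P.restrict S) := by
    intro t z
    refine integrable_finset_sum _ fun j _ => ?_
    by_cases hc : I j ω = t ∧ Z j ω = z
    · simp only [if_pos hc]; exact (hYint j t).integrableOn
    · simpa [hc] using (integrable_zero Ω ℝ (P.restrict S))
  have hIS : ∫ x in S, (∑ z, ((Nz n z ω : ℝ)/(n:ℝ)) *
      ((∑ j ∈ range n, if I j ω = tt ∧ Z j ω = z then Y j tt x else 0)/(Ntz n tt z ω : ℝ)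
       - (∑ j ∈ range n, if I j ω = ss ∧ Z j ω = z then Y j ss x else 0)
          /(Ntz n ss z ω : ℝ))) ∂P
      = (∑ z, ((Nz n z ω : ℝ)/(n:ℝ)) * (m tt z - m ss z)) * (P S).toReal := by
    have hterm_int : ∀ z, Integrable (fun x => ((Nz n z ω : ℝ)/(n:ℝ)) *
        ((∑ j ∈ range n, if I j ω = tt ∧ Z j ω = z then Y j tt x else 0)/(Ntz n tt z ω : ℝ)
         - (∑ j ∈ range n, if I j ω = ss ∧ Z j ω = z then Y j ss x else 0)
            /(Ntz n ss z ω : ℝ))) (P.restrict S) := by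
      intro z
      exact (((hsum_intOn tt z).div_const _).sub
        ((hsum_intOn ss z).div_const _)).const_mul _
    rw [integral_finset_sum _ (fun z _ => hterm_int z)]
    rw [Finset.sum_mul]
    refine Finset.sum_congr rfl fun z _ => ?_
    rw [integral_const_mul,
      integral_sub ((hsum_intOn tt z).div_const _) ((hsum_intOn ss z).div_const _),
      integral_div, integral_div]
    have hsum_eval : ∀ t : Fin k, ∫ x in S, (∑ j ∈ range n,
        if I j ω = t ∧ Z j ω = z then Y j t x else 0) ∂P
        = (Ntz n t z ω : ℝ) * (m t z * (P S).toReal) := by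
      intro t
      rw [integral_finset_sum _ (fun j _ => by
        by_cases hc : I j ω = t ∧ Z j ω = z
        · simp only [if_pos hc]; exact (hYint j t).integrableOn
        · simpa [hc] using (integrable_zero Ω ℝ (P.restrict S)))]
      have hterm : ∀ j ∈ range n,
          ∫ x in S, (if I j ω = t ∧ Z j ω = z then Y j t x else 0) ∂P
          = if I j ω = t ∧ Z j ω = z then m t z * (P S).toReal else 0 := by
        intro j hj
        by_cases hc : I j ω = t ∧ Z j ω = z
        · simp only [if_pos hc]
          have h1 : ∫ x in S, Y j t x ∂P
              = m t ((ZV ω) ⟨j, mem_range.mp hj⟩) * (P S).toReal := by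
            rw [hSdef]
            exact hK j (mem_range.mp hj) t (ZV ω) _ hAσ
          have h2 : (ZV ω) ⟨j, mem_range.mp hj⟩ = z := by
            simp only [hZVdef]
            exact hc.2
          rw [h1, h2]
        · simp only [if_neg hc]
          simp
      rw [Finset.sum_congr rfl hterm, ← Finset.sum_filter, Finset.sum_const, nsmul_eq_mul,
        ← hNtz]
    obtain ⟨h1, h2⟩ := hev z
    have htt0 : (Ntz n tt z ω : ℝ) ≠ 0 :=
      Nat.cast_ne_zero.mpr (Nat.one_le_iff_ne_zero.mp h1)
    have hss0 : (Ntz n ss z ω : ℝ) ≠ 0 :=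
      Nat.cast_ne_zero.mpr (Nat.one_le_iff_ne_zero.mp h2)
    rw [hsum_eval tt, hsum_eval ss, mul_div_cancel_left₀ _ htt0,
      mul_div_cancel_left₀ _ hss0]
    ring
  rw [hIS, mul_div_cancel_right₀ _ hPSt]
end

section
/- Under conditions (C1)–(C3), for every fixed n and every pair of distinct strata z ≠ z' in 𝒵, the conditional covariance of Ȳ_t(z) − Ȳ_s(z) and Ȳ_t(z') − Ȳ_s(z') given the σ-algebra 𝒟_n generated by (Z_1, …, Z_n, I_1, …, I_n) is zero almost surely; that is, E[(Ȳ_t(z) − Ȳ_s(z))(Ȳ_t(z') − Ȳ_s(z')) | 𝒟_n] = E[Ȳ_t(z) − Ȳ_s(z) | 𝒟_n] · E[Ȳ_t(z') − Ȳ_s(z') | 𝒟_n] a.s. -/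
open MeasureTheory ProbabilityTheory Filter Finset
open scoped NNReal ProbabilityTheory Topology

section helpers
variable {Ω : Type*} [m0 : MeasurableSpace Ω]

/-- Conditional expectation w.r.t. the σ-algebra generated by a map into a finite type:
explicit atom formula. -/
lemma aux_condexp_atom {α : Type*} [Fintype α] [mα : MeasurableSpace α]
    [MeasurableSingletonClass α] (P : Measure Ω) [IsFiniteMeasure P]
    {φ : Ω → α} (hφ : Measurable φ) {f : Ω → ℝ} (hf : Integrable f P) :
    MeasureTheory.condExp (mα.comap φ) P f
      =ᵐ[P] fun ω => (∫ x in φ ⁻¹' {φ ω}, f x ∂P) / (P (φ ⁻¹' {φ ω})).toReal := by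
  classical
  have hm : mα.comap φ ≤ m0 := hφ.comap_le
  haveI : SigmaFinite (P.trim hm) := inferInstance
  set c : α → ℝ := fun a => (∫ x in φ ⁻¹' {a}, f x ∂P) / (P (φ ⁻¹' {a})).toReal with hc
  have hatom : ∀ a : α, MeasurableSet (φ ⁻¹' {a}) := fun a => hφ (measurableSet_singleton a)
  have hgrep : (fun ω => c (φ ω))
      = fun ω => ∑ a : α, Set.indicator (φ ⁻¹' {a}) (fun _ => c a) ω := by
    funext ω
    rw [Finset.sum_eq_single (φ ω)]
    · simp [Set.indicator_of_mem, Set.mem_preimage]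
    · intro b _ hb
      exact Set.indicator_of_notMem (by simp [Ne.symm hb]) _
    · intro h; exact absurd (Finset.mem_univ _) h
  have hgint : Integrable (fun ω => c (φ ω)) P := by
    rw [hgrep]
    exact integrable_finset_sum _ fun a _ => (integrable_const (c a)).indicator (hatom a)
  have key : ∀ a : α, (∫ x in φ ⁻¹' {a}, c (φ x) ∂P) = ∫ x in φ ⁻¹' {a}, f x ∂P := by
    intro a
    have h1 : ∀ x ∈ φ ⁻¹' {a}, c (φ x) = c a := by
      intro x hx
      have : φ x = a := hx
      rw [this]
    rw [setIntegral_congr_fun (hatom a) h1, setIntegral_const, measureReal_def]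
    by_cases h0 : P (φ ⁻¹' {a}) = 0
    · rw [h0, Measure.restrict_eq_zero.mpr h0]
      simp
    · have hne : (P (φ ⁻¹' {a})).toReal ≠ 0 :=
        ENNReal.toReal_ne_zero.mpr ⟨h0, measure_ne_top _ _⟩
      rw [hc]
      simp only [smul_eq_mul]
      field_simp
  symm
  refine ae_eq_condExp_of_forall_setIntegral_eq hm hf ?_ ?_ ?_
  · exact fun s _ _ => hgint.integrableOn
  · intro s hs _
    obtain ⟨S, -, rfl⟩ := hs
    have hdecomp : φ ⁻¹' S = ⋃ a ∈ (Set.toFinite S).toFinset, φ ⁻¹' {a} := by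
      ext x
      simp only [Set.mem_preimage, Set.mem_iUnion, Set.Finite.mem_toFinset,
        Set.mem_singleton_iff]
      exact ⟨fun h => ⟨φ x, h, rfl⟩, by rintro ⟨a, ha, h⟩; rw [h]; exact ha⟩
    have hdisj : ((Set.toFinite S).toFinset : Set α).Pairwise
        (Function.onFun Disjoint fun a => φ ⁻¹' {a}) := by
      intro a _ b _ hab
      exact Set.disjoint_left.mpr (by rintro x hx1 hx2; exact hab ((Eq.symm hx1).trans hx2))
    rw [hdecomp,
      integral_biUnion_finset _ (fun a _ => hatom a) hdisj (fun a _ => hgint.integrableOn),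
      integral_biUnion_finset _ (fun a _ => hatom a) hdisj (fun a _ => hf.integrableOn)]
    exact Finset.sum_congr rfl fun a _ => key a
  · exact StronglyMeasurable.aestronglyMeasurable
      (((measurable_of_countable c).comp (Measurable.of_comap_le le_rfl)).stronglyMeasurable)

end helpers

section helpers
variable {Ω : Type*} [m0 : MeasurableSpace Ω]

omit m0 in
lemma aux_comap_tuple {β : Type*} [mβ : MeasurableSpace β] (n : ℕ) (X : ℕ → Ω → β) :
    (⨆ i ∈ Finset.range n, MeasurableSpace.comap (X i) mβ)
      = MeasurableSpace.comap (fun ω (i : Fin n) => X i ω) MeasurableSpace.pi := by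
  set M := ⨆ i ∈ Finset.range n, MeasurableSpace.comap (X i) mβ with hM
  apply le_antisymm
  · refine iSup₂_le fun i hi => ?_
    have hi' : i < n := Finset.mem_range.mp hi
    have : X i = (fun v : Fin n → β => v ⟨i, hi'⟩) ∘ (fun ω (j : Fin n) => X j ω) := rfl
    rw [this, ← MeasurableSpace.comap_comp]
    exact MeasurableSpace.comap_mono (measurable_pi_apply _).comap_le
  · have h : ∀ i : Fin n, Measurable[M] (X i.1) := fun i =>
      (Measurable.of_comap_le le_rfl).mono
        (le_iSup₂ (f := fun (i : ℕ) (_ : i ∈ Finset.range n) => MeasurableSpace.comap (X i) mβ)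
          i.1 (Finset.mem_range.mpr i.2)) le_rfl
    have h2 : Measurable[M] (fun ω (i : Fin n) => X i.1 ω) :=
      measurable_pi_iff.mpr fun i => h i
    exact h2.comap_le

omit m0 in
lemma aux_comap_tuple_pair {β γ : Type*} [mβ : MeasurableSpace β] [mγ : MeasurableSpace γ]
    (n : ℕ) (X : ℕ → Ω → β) (X' : ℕ → Ω → γ) :
    ((⨆ i ∈ Finset.range n, MeasurableSpace.comap (X i) mβ)
      ⊔ (⨆ i ∈ Finset.range n, MeasurableSpace.comap (X' i) mγ))
      = MeasurableSpace.comap (fun ω (i : Fin n) => (X i ω, X' i ω)) MeasurableSpace.pi := by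
  set M := (⨆ i ∈ Finset.range n, MeasurableSpace.comap (X i) mβ)
      ⊔ (⨆ i ∈ Finset.range n, MeasurableSpace.comap (X' i) mγ) with hM
  apply le_antisymm
  · refine sup_le (iSup₂_le fun i hi => ?_) (iSup₂_le fun i hi => ?_)
    · have hi' : i < n := Finset.mem_range.mp hi
      have : X i = (fun v : Fin n → β × γ => (v ⟨i, hi'⟩).1)
          ∘ (fun ω (j : Fin n) => (X j ω, X' j ω)) := rfl
      rw [this, ← MeasurableSpace.comap_comp]
      exact MeasurableSpace.comap_mono ((measurable_fst.comp (measurable_pi_apply _)).comap_le)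
    · have hi' : i < n := Finset.mem_range.mp hi
      have : X' i = (fun v : Fin n → β × γ => (v ⟨i, hi'⟩).2)
          ∘ (fun ω (j : Fin n) => (X j ω, X' j ω)) := rfl
      rw [this, ← MeasurableSpace.comap_comp]
      exact MeasurableSpace.comap_mono ((measurable_snd.comp (measurable_pi_apply _)).comap_le)
  · have h1 : ∀ i : Fin n, Measurable[M] (X i.1) := fun i =>
      (Measurable.of_comap_le le_rfl).mono
        (le_trans (le_iSup₂ (f := fun (i : ℕ) (_ : i ∈ Finset.range n) =>
          MeasurableSpace.comap (X i) mβ) i.1 (Finset.mem_range.mpr i.2)) le_sup_left) le_rfl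
    have h2 : ∀ i : Fin n, Measurable[M] (X' i.1) := fun i =>
      (Measurable.of_comap_le le_rfl).mono
        (le_trans (le_iSup₂ (f := fun (i : ℕ) (_ : i ∈ Finset.range n) =>
          MeasurableSpace.comap (X' i) mγ) i.1 (Finset.mem_range.mpr i.2)) le_sup_right) le_rfl
    have h3 : Measurable[M] (fun ω (i : Fin n) => (X i.1 ω, X' i.1 ω)) :=
      measurable_pi_iff.mpr fun i => Measurable.prodMk (h1 i) (h2 i)
    exact h3.comap_le

end helpers

/-- Continuity of integration over a set against `L¹` of a trimmed measure. -/
lemma aux_setIntegral_cont {Ω : Type*} {m : MeasurableSpace Ω} [m0 : MeasurableSpace Ω]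
    (hm : m ≤ m0) (P : Measure Ω) [IsFiniteMeasure P] {s : Set Ω} :
    Continuous fun f : Lp ℝ 1 (P.trim hm) => ∫ ω in s, f ω ∂P := by
  refine (LipschitzWith.of_dist_le_mul (K := 1) fun f g => ?_).continuous
  have hfi : Integrable (f : Ω → ℝ) P :=
    integrable_of_integrable_trim hm (L1.integrable_coeFn f)
  have hgi : Integrable (g : Ω → ℝ) P :=
    integrable_of_integrable_trim hm (L1.integrable_coeFn g)
  have hsub : Integrable (fun ω => f ω - g ω) P := hfi.sub hgi
  have h1 : ∫ ω in s, f ω ∂P - ∫ ω in s, g ω ∂P = ∫ ω in s, (f ω - g ω) ∂P :=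
    (integral_sub hfi.restrict hgi.restrict).symm
  have h2 : ‖∫ ω in s, (f ω - g ω) ∂P‖ ≤ ∫ ω in s, ‖f ω - g ω‖ ∂P :=
    norm_integral_le_integral_norm _
  have h3 : ∫ ω in s, ‖f ω - g ω‖ ∂P ≤ ∫ ω, ‖f ω - g ω‖ ∂P :=
    setIntegral_le_integral hsub.norm (Eventually.of_forall fun ω => norm_nonneg _)
  have h4 : ∫ ω, ‖f ω - g ω‖ ∂P = ∫ ω, ‖f ω - g ω‖ ∂(P.trim hm) :=
    integral_trim_ae hm ((Lp.aestronglyMeasurable f).sub (Lp.aestronglyMeasurable g)).norm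
  have h5 : dist f g = ∫ ω, ‖f ω - g ω‖ ∂(P.trim hm) := by
    rw [L1.dist_eq_integral_dist]
    simp_rw [dist_eq_norm]
  rw [NNReal.coe_one, one_mul, dist_eq_norm, dist_eq_norm f g]
  rw [dist_eq_norm] at h5
  calc ‖∫ ω in s, f ω ∂P - ∫ ω in s, g ω ∂P‖ = ‖∫ ω in s, (f ω - g ω) ∂P‖ := by rw [h1]
    _ ≤ ∫ ω in s, ‖f ω - g ω‖ ∂P := h2
    _ ≤ ∫ ω, ‖f ω - g ω‖ ∂P := h3
    _ = ‖f - g‖ := by rw [h4, ← h5]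

/-- Extension of a product identity from indicators to integrable `m`-measurable functions. -/
lemma aux_Qext {Ω : Type*} {m : MeasurableSpace Ω} [m0 : MeasurableSpace Ω]
    (hm : m ≤ m0) (P : Measure Ω) [IsFiniteMeasure P] {B C : Set Ω}
    (base : ∀ s : Set Ω, MeasurableSet[m] s →
      (P (s ∩ (B ∩ C))).toReal * (P C).toReal = (P (B ∩ C)).toReal * (P (s ∩ C)).toReal)
    {ψ : Ω → ℝ} (hψint : Integrable ψ P) (hψm : StronglyMeasurable[m] ψ) :
    (∫ ω in B ∩ C, ψ ω ∂P) * (P C).toReal = (P (B ∩ C)).toReal * ∫ ω in C, ψ ω ∂P := by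
  haveI : IsFiniteMeasure (P.trim hm) := isFiniteMeasure_trim hm
  set Q : (Ω → ℝ) → Prop := fun ψ =>
    (∫ ω in B ∩ C, ψ ω ∂P) * (P C).toReal = (P (B ∩ C)).toReal * ∫ ω in C, ψ ω ∂P with hQ
  have main : ∀ ⦃ψ : Ω → ℝ⦄, Integrable ψ (P.trim hm) → Q ψ := by
    refine @Integrable.induction Ω ℝ m _ (P.trim hm) Q ?_ ?_ ?_ ?_
    · intro cc s hs _
      have hs0 : MeasurableSet s := hm s hs
      simp only [hQ]
      rw [setIntegral_indicator hs0, setIntegral_indicator hs0, setIntegral_const,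
        setIntegral_const]
      simp only [smul_eq_mul, measureReal_def]
      have hb := base s hs
      rw [Set.inter_comm s (B ∩ C), Set.inter_comm s C] at hb
      linear_combination cc * hb
    · intro f g _ hfi hgi hQf hQg
      have hfi' : Integrable f P := integrable_of_integrable_trim hm hfi
      have hgi' : Integrable g P := integrable_of_integrable_trim hm hgi
      simp only [hQ, Pi.add_apply] at hQf hQg ⊢
      rw [integral_add hfi'.restrict hgi'.restrict, integral_add hfi'.restrict hgi'.restrict]
      ring_nf
      ring_nf at hQf hQg
      linarith [hQf, hQg]
    · have c1 : Continuous fun f : Lp ℝ 1 (P.trim hm) =>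
        (∫ ω in B ∩ C, f ω ∂P) * (P C).toReal :=
        (aux_setIntegral_cont hm P).mul continuous_const
      have c2 : Continuous fun f : Lp ℝ 1 (P.trim hm) =>
        (P (B ∩ C)).toReal * ∫ ω in C, f ω ∂P :=
        continuous_const.mul (aux_setIntegral_cont hm P)
      exact isClosed_eq c1 c2
    · intro f g hfg hfi hQf
      have hfg' : f =ᵐ[P] g := ae_eq_of_ae_eq_trim hfg
      simp only [hQ] at hQf ⊢
      rw [← integral_congr_ae (ae_restrict_of_ae hfg'),
        ← integral_congr_ae (ae_restrict_of_ae hfg')]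
      exact hQf
  exact main (hψint.trim hm hψm)

/-- Under (C1)–(C3), for every fixed `n` and distinct strata `z ≠ z'`,
the conditional covariance of `Ȳ_t(z) − Ȳ_s(z)` and `Ȳ_t(z') − Ȳ_s(z')` given
`𝒟ₙ = σ(Z₁,…,Zₙ,I₁,…,Iₙ)` vanishes almost surely. -/
theorem stmt13 {Ω : Type*} [MeasurableSpace Ω] (P : Measure Ω) [IsProbabilityMeasure P]
    {𝓦 : Type*} [MeasurableSpace 𝓦]
    {𝓩 : Type*} [Fintype 𝓩] [DecidableEq 𝓩] [MeasurableSpace 𝓩] [MeasurableSingletonClass 𝓩]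
    {k : ℕ} (hk : 2 ≤ k)
    (π : Fin k → ℝ) (hπ : ∀ t, π t ∈ Set.Ioo (0 : ℝ) 1) (hπsum : ∑ t, π t = 1)
    -- (C1): the i.i.d. sequence and its population version
    (Y : ℕ → Fin k → Ω → ℝ) (W : ℕ → Ω → 𝓦)
    (Ypop : Fin k → Ω → ℝ) (Wpop : Ω → 𝓦)
    (hYmeas : ∀ i t, Measurable (Y i t)) (hWmeas : ∀ i, Measurable (W i))
    (hYpopmeas : ∀ t, Measurable (Ypop t)) (hWpopmeas : Measurable Wpop)
    (hident : ∀ i, Measure.map (fun ω => ((fun t => Y i t ω), W i ω)) P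
        = Measure.map (fun ω => ((fun t => Ypop t ω), Wpop ω)) P)
    (hindep : iIndepFun
        (fun i ω => ((fun t => Y i t ω), W i ω)) P)
    (hY2 : ∀ t, MemLp (Ypop t) 2 P)
    -- strata
    (g : 𝓦 → 𝓩) (hg : Measurable g)
    (Z : ℕ → Ω → 𝓩) (hZdef : ∀ i ω, Z i ω = g (W i ω))
    (Zpop : Ω → 𝓩) (hZpopdef : ∀ ω, Zpop ω = g (Wpop ω))
    (hZpos : ∀ z, 0 < P {ω | Zpop ω = z})
    -- treatment assignments and observed responses
    (I : ℕ → Ω → Fin k) (hImeas : ∀ i, Measurable (I i))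
    (Yobs : ℕ → Ω → ℝ) (hYobs : ∀ i ω, Yobs i ω = Y i (I i ω) ω)
    -- stratum/treatment counts
    (Nz : ℕ → 𝓩 → Ω → ℕ)
    (hNz : ∀ n z ω, Nz n z ω = ((range n).filter fun i => Z i ω = z).card)
    (Ntz : ℕ → Fin k → 𝓩 → Ω → ℕ)
    (hNtz : ∀ n t z ω,
      Ntz n t z ω = ((range n).filter fun i => I i ω = t ∧ Z i ω = z).card)
    -- σ-algebras generated by the strata, the assignments, and the raw data
    (𝒢 σI σYW : ℕ → MeasurableSpace Ω)
    (h𝒢 : ∀ n, 𝒢 n = ⨆ i ∈ range n, MeasurableSpace.comap (Z i) inferInstance)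
    (hσI : ∀ n, σI n = ⨆ i ∈ range n, MeasurableSpace.comap (I i) inferInstance)
    (hσYW : ∀ n, σYW n = ⨆ i ∈ range n,
        MeasurableSpace.comap (fun ω => ((fun t => Y i t ω), W i ω)) inferInstance)
    -- (C2): conditional independence of assignments and data given the strata
    (hC2 : ∀ n (A B : Set Ω), MeasurableSet[σI n] A → MeasurableSet[σYW n] B →
        MeasureTheory.condExp (𝒢 n) P ((A ∩ B).indicator fun _ => (1 : ℝ))
          =ᵐ[P] fun ω =>
            MeasureTheory.condExp (𝒢 n) P (A.indicator fun _ => (1 : ℝ)) ω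
              * MeasureTheory.condExp (𝒢 n) P (B.indicator fun _ => (1 : ℝ)) ω)
    -- (C3): conditional assignment probabilities and vanishing relative imbalance
    (hC3a : ∀ n, ∀ i < n, ∀ t,
        MeasureTheory.condExp (𝒢 n) P ({ω | I i ω = t}.indicator fun _ => (1 : ℝ))
          =ᵐ[P] fun _ => π t)
    -- the two fixed treatments and the average treatment effect
    (tt ss : Fin k) (hts : tt ≠ ss)
    (θ : ℝ) (hθ : θ = ∫ ω, (Ypop tt ω - Ypop ss ω) ∂P)
    -- stratified sample means and the stratified estimator
    (Ybar : ℕ → Fin k → 𝓩 → Ω → ℝ)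
    (hYbar : ∀ n t z ω, Ybar n t z ω
      = (∑ i ∈ range n, if I i ω = t ∧ Z i ω = z then Yobs i ω else 0)
          / (Ntz n t z ω : ℝ))
    -- the σ-algebra generated by strata and assignments
    (𝒟 : ℕ → MeasurableSpace Ω) (h𝒟 : ∀ n, 𝒟 n = 𝒢 n ⊔ σI n) :
    ∀ n : ℕ, ∀ z z' : 𝓩, z ≠ z' →
      MeasureTheory.condExp (𝒟 n) P
          (fun ω => (Ybar n tt z ω - Ybar n ss z ω) * (Ybar n tt z' ω - Ybar n ss z' ω))
        =ᵐ[P] fun ω =>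
          MeasureTheory.condExp (𝒟 n) P (fun ω' => Ybar n tt z ω' - Ybar n ss z ω') ω
            * MeasureTheory.condExp (𝒟 n) P
                (fun ω' => Ybar n tt z' ω' - Ybar n ss z' ω') ω := by
  
  classical
  intro n z z' hzz'
  -- basic measurability
  have hXmeas : ∀ i, Measurable (fun ω => ((fun t => Y i t ω), W i ω)) :=
    fun i => Measurable.prodMk (measurable_pi_iff.mpr fun t => hYmeas i t) (hWmeas i)
  have hZmeas : ∀ i, Measurable (Z i) := by
    intro i
    have : Z i = fun ω => g (W i ω) := funext fun ω => hZdef i ω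
    rw [this]; exact hg.comp (hWmeas i)
  have hGle : 𝒢 n ≤ ‹MeasurableSpace Ω› := by
    rw [h𝒢]; exact iSup₂_le fun i _ => (hZmeas i).comap_le
  have hIle : σI n ≤ ‹MeasurableSpace Ω› := by
    rw [hσI]; exact iSup₂_le fun i _ => (hImeas i).comap_le
  have hYWle : σYW n ≤ ‹MeasurableSpace Ω› := by
    rw [hσYW]; exact iSup₂_le fun i _ => (hXmeas i).comap_le
  have hDle : 𝒟 n ≤ ‹MeasurableSpace Ω› := by
    rw [h𝒟]; exact sup_le hGle hIle
  -- pattern maps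
  set Φ : Ω → (Fin n → 𝓩 × Fin k) := fun ω (i : Fin n) => (Z i ω, I i ω) with hΦdef
  set Φz : Ω → (Fin n → 𝓩) := fun ω (i : Fin n) => Z i ω with hΦzdef
  have hΦmeas : Measurable Φ :=
    measurable_pi_iff.mpr fun i => ((hZmeas i).prodMk (hImeas i))
  have hΦzmeas : Measurable Φz := measurable_pi_iff.mpr fun i => hZmeas i
  have hDeq : 𝒟 n = MeasurableSpace.comap Φ MeasurableSpace.pi := by
    rw [h𝒟, h𝒢, hσI]; exact aux_comap_tuple_pair n Z I
  have hGeq : 𝒢 n = MeasurableSpace.comap Φz MeasurableSpace.pi := by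
    rw [h𝒢]; exact aux_comap_tuple n Z
  -- L² bounds for the data
  have hYiL2 : ∀ i t, MemLp (Y i t) 2 P := by
    intro i t
    have hφt : Measurable (fun p : (Fin k → ℝ) × 𝓦 => p.1 t) :=
      (measurable_pi_apply t).comp measurable_fst
    have h1 : MemLp ((fun p : (Fin k → ℝ) × 𝓦 => p.1 t)
        ∘ (fun ω => ((fun t => Ypop t ω), Wpop ω))) 2 P := hY2 t
    have h2 : MemLp (fun p : (Fin k → ℝ) × 𝓦 => p.1 t) 2
        (Measure.map (fun ω => ((fun t => Ypop t ω), Wpop ω)) P) := by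
      rw [memLp_map_measure_iff hφt.aestronglyMeasurable
        (Measurable.aemeasurable (Measurable.prodMk
          (measurable_pi_iff.mpr fun s => hYpopmeas s) hWpopmeas))]
      exact h1
    have h3 : MemLp (fun p : (Fin k → ℝ) × 𝓦 => p.1 t) 2
        (Measure.map (fun ω => ((fun t => Y i t ω), W i ω)) P) := by
      rw [hident i]; exact h2
    have h4 : MemLp ((fun p : (Fin k → ℝ) × 𝓦 => p.1 t)
        ∘ (fun ω => ((fun t => Y i t ω), W i ω))) 2 P := by
      rw [← memLp_map_measure_iff hφt.aestronglyMeasurable (Measurable.aemeasurable (hXmeas i))]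
      exact h3
    exact h4
  have hYiInt : ∀ i t, Integrable (Y i t) P := fun i t => (hYiL2 i t).integrable one_le_two
  -- measurability of the stratified means
  have hYobsmeas : ∀ i, Measurable (Yobs i) := by
    intro i
    have : Yobs i = fun ω => ∑ t : Fin k, if I i ω = t then Y i t ω else 0 := by
      funext ω
      rw [Finset.sum_ite_eq (Finset.univ) (I i ω) (fun t => Y i t ω), if_pos (Finset.mem_univ _),
        hYobs]
    rw [this]
    exact Finset.measurable_sum _ fun t _ =>
      Measurable.ite ((hImeas i) (measurableSet_singleton t)) (hYmeas i t) measurable_const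
  have hNtzmeas : ∀ t zz, Measurable fun ω => (Ntz n t zz ω : ℝ) := by
    intro t zz
    have : (fun ω => (Ntz n t zz ω : ℝ))
        = fun ω => ∑ i ∈ range n, if I i ω = t ∧ Z i ω = zz then (1:ℝ) else 0 := by
      funext ω
      rw [hNtz, Finset.card_filter]
      push_cast
      rfl
    rw [this]
    refine Finset.measurable_sum _ fun i _ => Measurable.ite ?_ measurable_const measurable_const
    have : {ω | I i ω = t ∧ Z i ω = zz} = (I i) ⁻¹' {t} ∩ (Z i) ⁻¹' {zz} := rfl
    rw [this]
    exact ((hImeas i) (measurableSet_singleton t)).inter ((hZmeas i) (measurableSet_singleton zz))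
  have hYbarmeas : ∀ t zz, Measurable (Ybar n t zz) := by
    intro t zz
    have : Ybar n t zz = fun ω =>
        (∑ i ∈ range n, if I i ω = t ∧ Z i ω = zz then Yobs i ω else 0) / (Ntz n t zz ω : ℝ) :=
      funext fun ω => hYbar n t zz ω
    rw [this]
    refine Measurable.div ?_ (hNtzmeas t zz)
    refine Finset.measurable_sum _ fun i _ => Measurable.ite ?_ (hYobsmeas i) measurable_const
    have : {ω | I i ω = t ∧ Z i ω = zz} = (I i) ⁻¹' {t} ∩ (Z i) ⁻¹' {zz} := rfl
    rw [this]
    exact ((hImeas i) (measurableSet_singleton t)).inter ((hZmeas i) (measurableSet_singleton zz))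
  -- L² bound for the stratified means
  have hYbarL2 : ∀ t zz, MemLp (Ybar n t zz) 2 P := by
    intro t zz
    have hMem : MemLp (fun ω => ∑ i ∈ range n, |Y i t ω|) 2 P :=
      memLp_finset_sum _ fun i _ => (hYiL2 i t).abs
    refine MemLp.of_le hMem (hYbarmeas t zz).aestronglyMeasurable
      (Eventually.of_forall fun ω => ?_)
    have hb : |Ybar n t zz ω| ≤ ∑ i ∈ range n, |Y i t ω| := by
      rw [hYbar]
      by_cases hN : Ntz n t zz ω = 0
      · have hnum : (∑ i ∈ range n, if I i ω = t ∧ Z i ω = zz then Yobs i ω else 0) = 0 := by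
          refine Finset.sum_eq_zero fun i hi => ?_
          rw [if_neg]
          intro hcond
          have : i ∈ (range n).filter fun j => I j ω = t ∧ Z j ω = zz :=
            Finset.mem_filter.mpr ⟨hi, hcond⟩
          have := Finset.card_pos.mpr ⟨i, this⟩
          rw [← hNtz n t zz ω] at this
          omega
        rw [hnum, hN]
        simp [Finset.sum_nonneg fun i _ => abs_nonneg (Y i t ω)]
      · have h1 : (1:ℝ) ≤ (Ntz n t zz ω : ℝ) := by
          exact_mod_cast Nat.one_le_iff_ne_zero.mpr hN
        have hpos : (0:ℝ) < (Ntz n t zz ω : ℝ) := lt_of_lt_of_le one_pos h1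
        rw [abs_div, abs_of_pos hpos]
        refine le_trans (div_le_self (abs_nonneg _) h1) ?_
        refine le_trans (Finset.abs_sum_le_sum_abs _ _) ?_
        refine Finset.sum_le_sum fun i hi => ?_
        by_cases hcond : I i ω = t ∧ Z i ω = zz
        · rw [if_pos hcond, hYobs, hcond.1]
        · rw [if_neg hcond]
          simp [abs_nonneg]
    calc ‖Ybar n t zz ω‖ = |Ybar n t zz ω| := rfl
      _ ≤ ∑ i ∈ range n, |Y i t ω| := hb
      _ ≤ ‖∑ i ∈ range n, |Y i t ω|‖ := le_abs_self _
  -- the two estimator differences and their product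
  set ffun : Ω → ℝ := fun ω => Ybar n tt z ω - Ybar n ss z ω with hffun
  set gfun : Ω → ℝ := fun ω => Ybar n tt z' ω - Ybar n ss z' ω with hgfun
  have hfL2 : MemLp ffun 2 P := (hYbarL2 tt z).sub (hYbarL2 ss z)
  have hgL2 : MemLp gfun 2 P := (hYbarL2 tt z').sub (hYbarL2 ss z')
  have hfint : Integrable ffun P := hfL2.integrable one_le_two
  have hgint : Integrable gfun P := hgL2.integrable one_le_two
  have hmul_int : ∀ (u v : Ω → ℝ), MemLp u 2 P → MemLp v 2 P →
      Integrable (fun ω => u ω * v ω) P := by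
    intro u v hu hv
    have h := hv.smul (φ := u) (r := 1) hu
    rw [memLp_one_iff_integrable] at h
    exact h
  have hfgint : Integrable (fun ω => ffun ω * gfun ω) P := hmul_int _ _ hfL2 hgL2
  -- conditional expectation formulas
  have h1 := aux_condexp_atom P hΦmeas hfgint
  have h2 := aux_condexp_atom P hΦmeas hfint
  have h3 := aux_condexp_atom P hΦmeas hgint
  -- almost every ω lies in an atom of positive probability
  have hnull : ∀ᵐ ω ∂P, P (Φ ⁻¹' {Φ ω}) ≠ 0 := by
    rw [ae_iff]
    have hsub : {x | ¬ P (Φ ⁻¹' {Φ x}) ≠ 0} ⊆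
        ⋃ c ∈ {c : Fin n → 𝓩 × Fin k | P (Φ ⁻¹' {c}) = 0}, Φ ⁻¹' {c} := by
      intro x hx
      simp only [Set.mem_setOf_eq, not_not] at hx
      exact Set.mem_biUnion hx (show x ∈ Φ ⁻¹' {Φ x} from rfl)
    refine measure_mono_null hsub ?_
    refine (measure_biUnion_null_iff (Set.to_countable _)).mpr ?_
    intro c hc
    exact hc
  show MeasureTheory.condExp (𝒟 n) P (fun ω => ffun ω * gfun ω)
      =ᵐ[P] fun ω => MeasureTheory.condExp (𝒟 n) P ffun ω * MeasureTheory.condExp (𝒟 n) P gfun ω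
  rw [hDeq]
  filter_upwards [h1, h2, h3, hnull] with ω e1 e2 e3 hω
  rw [e1, e2, e3]
  -- the atom of ω
  set c : Fin n → 𝓩 × Fin k := Φ ω with hc
  set B : Set Ω := ⋂ i : Fin n, (I (i:ℕ)) ⁻¹' {(c i).2} with hBdef
  set C : Set Ω := ⋂ i : Fin n, (Z (i:ℕ)) ⁻¹' {(c i).1} with hCdef
  have hABC : Φ ⁻¹' {c} = B ∩ C := by
    ext x
    simp only [Set.mem_preimage, Set.mem_singleton_iff, Set.mem_inter_iff, Set.mem_iInter,
      funext_iff, Prod.ext_iff, hBdef, hCdef, hΦdef]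
    constructor
    · intro h; exact ⟨fun i => (h i).2, fun i => (h i).1⟩
    · intro h i; exact ⟨h.2 i, h.1 i⟩
  have hCz : C = Φz ⁻¹' {fun i : Fin n => (c i).1} := by
    ext x
    simp only [Set.mem_preimage, Set.mem_singleton_iff, Set.mem_iInter, funext_iff, hΦzdef,
      hCdef]
  have hBamb : MeasurableSet B :=
    MeasurableSet.iInter fun i => (hImeas _) (measurableSet_singleton _)
  have hCamb : MeasurableSet C :=
    MeasurableSet.iInter fun i => (hZmeas _) (measurableSet_singleton _)
  have hBI : MeasurableSet[σI n] B := by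
    rw [hσI]
    refine MeasurableSet.iInter fun i => ?_
    have hle : MeasurableSpace.comap (I (i:ℕ)) inferInstance
        ≤ ⨆ j ∈ range n, MeasurableSpace.comap (I j) inferInstance :=
      le_iSup₂ (f := fun (j : ℕ) (_ : j ∈ range n) => MeasurableSpace.comap (I j) inferInstance)
        (i:ℕ) (Finset.mem_range.mpr i.2)
    exact hle _ ⟨{(c i).2}, measurableSet_singleton _, rfl⟩
  have hCG : MeasurableSet[𝒢 n] C := by
    rw [h𝒢]
    refine MeasurableSet.iInter fun i => ?_
    have hle : MeasurableSpace.comap (Z (i:ℕ)) inferInstance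
        ≤ ⨆ j ∈ range n, MeasurableSpace.comap (Z j) inferInstance :=
      le_iSup₂ (f := fun (j : ℕ) (_ : j ∈ range n) => MeasurableSpace.comap (Z j) inferInstance)
        (i:ℕ) (Finset.mem_range.mpr i.2)
    exact hle _ ⟨{(c i).1}, measurableSet_singleton _, rfl⟩
  have hCYW : MeasurableSet[σYW n] C := by
    rw [hσYW]
    refine MeasurableSet.iInter fun i => ?_
    have hle : MeasurableSpace.comap (fun ω' => ((fun t => Y (i:ℕ) t ω'), W (i:ℕ) ω'))
          inferInstance
        ≤ ⨆ j ∈ range n,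
            MeasurableSpace.comap (fun ω' => ((fun t => Y j t ω'), W j ω')) inferInstance :=
      le_iSup₂ (f := fun (j : ℕ) (_ : j ∈ range n) =>
          MeasurableSpace.comap (fun ω' => ((fun t => Y j t ω'), W j ω')) inferInstance)
        (i:ℕ) (Finset.mem_range.mpr i.2)
    refine hle _ ⟨(fun q : (Fin k → ℝ) × 𝓦 => g q.2) ⁻¹' {(c i).1},
      (hg.comp measurable_snd) (measurableSet_singleton _), ?_⟩
    ext x
    simp [hZdef]
  have hYsm : ∀ i : Fin n, ∀ t, Measurable[σYW n] (Y (i:ℕ) t) := by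
    intro i t
    have hXm : Measurable[σYW n] (fun ω' => ((fun t => Y (i:ℕ) t ω'), W (i:ℕ) ω')) := by
      rw [hσYW]
      exact Measurable.of_comap_le
        (le_iSup₂ (f := fun (j : ℕ) (_ : j ∈ range n) =>
          MeasurableSpace.comap (fun ω' => ((fun t => Y j t ω'), W j ω')) inferInstance)
          (i:ℕ) (Finset.mem_range.mpr i.2))
    exact ((measurable_pi_apply t).comp measurable_fst).comp hXm
  -- the frozen stratified means on the atom
  set F : Ω → ℝ := fun x =>
      (∑ i ∈ Finset.univ.filter (fun i : Fin n => (c i).2 = tt ∧ (c i).1 = z), Y (i:ℕ) tt x)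
        / ((Finset.univ.filter (fun i : Fin n => (c i).2 = tt ∧ (c i).1 = z)).card : ℝ)
      - (∑ i ∈ Finset.univ.filter (fun i : Fin n => (c i).2 = ss ∧ (c i).1 = z), Y (i:ℕ) ss x)
        / ((Finset.univ.filter (fun i : Fin n => (c i).2 = ss ∧ (c i).1 = z)).card : ℝ)
    with hFdef
  set G : Ω → ℝ := fun x =>
      (∑ i ∈ Finset.univ.filter (fun i : Fin n => (c i).2 = tt ∧ (c i).1 = z'), Y (i:ℕ) tt x)
        / ((Finset.univ.filter (fun i : Fin n => (c i).2 = tt ∧ (c i).1 = z')).card : ℝ)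
      - (∑ i ∈ Finset.univ.filter (fun i : Fin n => (c i).2 = ss ∧ (c i).1 = z'), Y (i:ℕ) ss x)
        / ((Finset.univ.filter (fun i : Fin n => (c i).2 = ss ∧ (c i).1 = z')).card : ℝ)
    with hGdef
  have hYbar_on : ∀ (t : Fin k) (zz : 𝓩) (x : Ω), x ∈ B ∩ C →
      Ybar n t zz x
        = (∑ i ∈ Finset.univ.filter (fun i : Fin n => (c i).2 = t ∧ (c i).1 = zz), Y (i:ℕ) t x)
          / ((Finset.univ.filter (fun i : Fin n => (c i).2 = t ∧ (c i).1 = zz)).card : ℝ) := by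
    intro t zz x hx
    have hI : ∀ i : Fin n, I (i:ℕ) x = (c i).2 := fun i => (Set.mem_iInter.mp hx.1 i)
    have hZ : ∀ i : Fin n, Z (i:ℕ) x = (c i).1 := fun i => (Set.mem_iInter.mp hx.2 i)
    rw [hYbar]
    have hnum : (∑ i ∈ range n, if I i x = t ∧ Z i x = zz then Yobs i x else 0)
        = ∑ i ∈ Finset.univ.filter (fun i : Fin n => (c i).2 = t ∧ (c i).1 = zz),
            Y (i:ℕ) t x := by
      rw [← Fin.sum_univ_eq_sum_range (fun i => if I i x = t ∧ Z i x = zz then Yobs i x else 0) n,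
        Finset.sum_filter]
      refine Finset.sum_congr rfl fun i _ => ?_
      rw [hYobs, hI i, hZ i]
      by_cases hcond : (c i).2 = t ∧ (c i).1 = zz
      · rw [if_pos hcond, if_pos hcond, hcond.1]
      · rw [if_neg hcond, if_neg hcond]
    have hden : (Ntz n t zz x : ℕ)
        = ((Finset.univ.filter (fun i : Fin n => (c i).2 = t ∧ (c i).1 = zz)).card : ℕ) := by
      rw [hNtz, Finset.card_filter, Finset.card_filter,
        ← Fin.sum_univ_eq_sum_range (fun i => if I i x = t ∧ Z i x = zz then 1 else 0) n]
      refine Finset.sum_congr rfl fun i _ => ?_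
      rw [hI i, hZ i]
    rw [hnum, hden]
  have hfF : ∀ x ∈ B ∩ C, ffun x = F x := by
    intro x hx
    rw [hffun, hFdef]
    simp only
    rw [hYbar_on tt z x hx, hYbar_on ss z x hx]
  have hgG : ∀ x ∈ B ∩ C, gfun x = G x := by
    intro x hx
    rw [hgfun, hGdef]
    simp only
    rw [hYbar_on tt z' x hx, hYbar_on ss z' x hx]
  -- measurability and integrability of the frozen means
  have hsumL2 : ∀ (t : Fin k) (S : Finset (Fin n)),
      MemLp (fun x => (∑ i ∈ S, Y (i:ℕ) t x) / (S.card : ℝ)) 2 P := by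
    intro t S
    have h1 : MemLp (fun x => ∑ i ∈ S, Y (i:ℕ) t x) 2 P :=
      memLp_finset_sum _ fun i _ => hYiL2 _ t
    have h2 := h1.const_mul ((S.card : ℝ))⁻¹
    have : (fun x => ((S.card : ℝ))⁻¹ * ∑ i ∈ S, Y (i:ℕ) t x)
        = fun x => (∑ i ∈ S, Y (i:ℕ) t x) / (S.card : ℝ) :=
      funext fun x => inv_mul_eq_div _ _
    rwa [this] at h2
  have hFsm : Measurable[σYW n] F := by
    rw [hFdef]
    exact Measurable.sub
      (Measurable.div_const (Finset.measurable_sum _ fun i _ => hYsm i tt) _)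
      (Measurable.div_const (Finset.measurable_sum _ fun i _ => hYsm i ss) _)
  have hGsm : Measurable[σYW n] G := by
    rw [hGdef]
    exact Measurable.sub
      (Measurable.div_const (Finset.measurable_sum _ fun i _ => hYsm i tt) _)
      (Measurable.div_const (Finset.measurable_sum _ fun i _ => hYsm i ss) _)
  have hFL2 : MemLp F 2 P := by rw [hFdef]; exact (hsumL2 tt _).sub (hsumL2 ss _)
  have hGL2 : MemLp G 2 P := by rw [hGdef]; exact (hsumL2 tt _).sub (hsumL2 ss _)
  have hFint : Integrable F P := hFL2.integrable one_le_two
  have hGint : Integrable G P := hGL2.integrable one_le_two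
  have hFGint : Integrable (fun x => F x * G x) P := hmul_int _ _ hFL2 hGL2
  -- indicator integral helper
  have hind : ∀ (D E' : Set Ω), MeasurableSet D →
      ∫ x in E', D.indicator (fun _ => (1:ℝ)) x ∂P = (P (E' ∩ D)).toReal := by
    intro D E' hD
    rw [setIntegral_indicator hD, setIntegral_const, smul_eq_mul, mul_one, measureReal_def]
  have hintind : ∀ D : Set Ω, MeasurableSet D →
      Integrable (D.indicator fun _ => (1:ℝ)) P :=
    fun D hD => (integrable_const 1).indicator hD
  haveI : IsFiniteMeasure (P.trim hGle) := isFiniteMeasure_trim hGle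
  -- the key product identity for indicators, from (C2)
  have base : ∀ s : Set Ω, MeasurableSet[σYW n] s →
      (P (s ∩ (B ∩ C))).toReal * (P C).toReal
        = (P (B ∩ C)).toReal * (P (s ∩ C)).toReal := by
    intro s hs
    by_cases hPC : P C = 0
    · have e1 : P (s ∩ (B ∩ C)) = 0 :=
        measure_mono_null (fun x hx => hx.2.2) hPC
      have e2 : P (s ∩ C) = 0 := measure_mono_null (fun x hx => hx.2) hPC
      rw [e1, e2, hPC]; simp
    have hsamb : MeasurableSet s := hYWle s hs
    have hC2' := hC2 n B (s ∩ C) hBI (hs.inter hCYW)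
    have hLHS : ∫ x in C,
        (MeasureTheory.condExp (𝒢 n) P ((B ∩ (s ∩ C)).indicator fun _ => (1:ℝ))) x ∂P
        = (P (B ∩ (s ∩ C))).toReal := by
      rw [setIntegral_condExp hGle (hintind _ (hBamb.inter (hsamb.inter hCamb))) hCG,
        hind _ _ (hBamb.inter (hsamb.inter hCamb)),
        Set.inter_eq_self_of_subset_right (fun x hx => hx.2.2 : B ∩ (s ∩ C) ⊆ C)]
    have hψC := aux_condexp_atom P hΦzmeas (hintind _ (hsamb.inter hCamb))
    rw [← hGeq] at hψC
    have hRHS : ∫ x in C,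
        ((MeasureTheory.condExp (𝒢 n) P (B.indicator fun _ => (1:ℝ))) x
          * (MeasureTheory.condExp (𝒢 n) P ((s ∩ C).indicator fun _ => (1:ℝ))) x) ∂P
        = (P (s ∩ C)).toReal / (P C).toReal * (P (B ∩ C)).toReal := by
      have heqC : ∀ᵐ x ∂(P.restrict C),
          (MeasureTheory.condExp (𝒢 n) P (B.indicator fun _ => (1:ℝ))) x
            * (MeasureTheory.condExp (𝒢 n) P ((s ∩ C).indicator fun _ => (1:ℝ))) x
          = (MeasureTheory.condExp (𝒢 n) P (B.indicator fun _ => (1:ℝ))) x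
            * ((P (s ∩ C)).toReal / (P C).toReal) := by
        filter_upwards [ae_restrict_of_ae hψC, ae_restrict_mem hCamb] with x hx hxC
        rw [hx]
        congr 1
        have hφzx : Φz x = fun i : Fin n => (c i).1 := by
          funext i
          exact Set.mem_iInter.mp hxC i
        rw [hφzx, ← hCz, hind _ _ (hsamb.inter hCamb),
          Set.inter_eq_self_of_subset_right (fun y hy => hy.2 : s ∩ C ⊆ C)]
      rw [integral_congr_ae heqC, integral_mul_const,
        setIntegral_condExp hGle (hintind _ hBamb) hCG, hind _ _ hBamb,
        Set.inter_comm C B]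
      ring
    have hmain : (P (B ∩ (s ∩ C))).toReal
        = (P (s ∩ C)).toReal / (P C).toReal * (P (B ∩ C)).toReal := by
      rw [← hLHS, ← hRHS]
      exact integral_congr_ae (ae_restrict_of_ae hC2')
    have hPCne : (P C).toReal ≠ 0 := ENNReal.toReal_ne_zero.mpr ⟨hPC, measure_ne_top _ _⟩
    have hrearr : s ∩ (B ∩ C) = B ∩ (s ∩ C) := by
      ext x
      simp only [Set.mem_inter_iff]
      tauto
    rw [hrearr, hmain]
    field_simp
  -- extend to all σYW-measurable integrable functions
  have hQF := aux_Qext hYWle P base hFint hFsm.stronglyMeasurable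
  have hQG := aux_Qext hYWle P base hGint hGsm.stronglyMeasurable
  have hQFG := aux_Qext hYWle P base hFGint (hFsm.mul hGsm).stronglyMeasurable
  -- the independence identity across distinct strata
  have hP2' : (∫ x in C, F x * G x ∂P) * (P C).toReal
      = (∫ x in C, F x ∂P) * (∫ x in C, G x ∂P) := by
    -- the two blocks of coordinates
    set Sz : Finset (Fin n) := Finset.univ.filter (fun i : Fin n => (c i).1 = z) with hSz
    set Tz : Finset (Fin n) := Finset.univ.filter (fun i : Fin n => ¬ (c i).1 = z) with hTz
    set SB : Finset ℕ := Sz.map Fin.valEmbedding with hSB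
    set TB : Finset ℕ := Tz.map Fin.valEmbedding with hTBdef
    have hdisj : Disjoint SB TB := by
      rw [Finset.disjoint_left]
      intro a ha hb
      rw [hSB, Finset.mem_map] at ha
      rw [hTBdef, Finset.mem_map] at hb
      obtain ⟨i, hi, rfl⟩ := ha
      obtain ⟨j, hj, hji⟩ := hb
      have hij : j = i := Fin.val_injective hji
      rw [hSz, Finset.mem_filter] at hi
      rw [hTz, Finset.mem_filter] at hj
      rw [hij] at hj
      exact hj.2 hi.2
    -- the tuples of data in each block
    set tupS : Ω → (↑SB → (Fin k → ℝ) × 𝓦) :=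
      fun a (j : ↑SB) => ((fun t => Y (↑j) t a), W (↑j) a) with htupS
    set tupT : Ω → (↑TB → (Fin k → ℝ) × 𝓦) :=
      fun a (j : ↑TB) => ((fun t => Y (↑j) t a), W (↑j) a) with htupT
    have hIF : IndepFun tupS tupT P := hindep.indepFun_finset SB TB hdisj hXmeas
    -- membership helpers
    have hmemS : ∀ i : Fin n, i ∈ Sz → (i : ℕ) ∈ SB :=
      fun i hi => Finset.mem_map_of_mem _ hi
    have hmemT : ∀ i : Fin n, i ∈ Tz → (i : ℕ) ∈ TB :=
      fun i hi => Finset.mem_map_of_mem _ hi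
    have hS1z : ∀ i : Fin n, ((c i).2 = tt ∧ (c i).1 = z) → i ∈ Sz :=
      fun i hi => Finset.mem_filter.mpr ⟨Finset.mem_univ _, hi.2⟩
    have hS2z : ∀ i : Fin n, ((c i).2 = ss ∧ (c i).1 = z) → i ∈ Sz :=
      fun i hi => Finset.mem_filter.mpr ⟨Finset.mem_univ _, hi.2⟩
    have hS1z' : ∀ i : Fin n, ((c i).2 = tt ∧ (c i).1 = z') → i ∈ Tz :=
      fun i hi => Finset.mem_filter.mpr ⟨Finset.mem_univ _,
        fun h => hzz' (h.symm.trans hi.2)⟩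
    have hS2z' : ∀ i : Fin n, ((c i).2 = ss ∧ (c i).1 = z') → i ∈ Tz :=
      fun i hi => Finset.mem_filter.mpr ⟨Finset.mem_univ _,
        fun h => hzz' (h.symm.trans hi.2)⟩
    -- the block functionals
    set UP1 : (↑SB → (Fin k → ℝ) × 𝓦) → ℝ := fun v =>
      ∏ jj ∈ Sz.attach,
        (if g ((v ⟨((jj : Fin n) : ℕ), hmemS _ jj.2⟩).2) = (c (jj : Fin n)).1
          then (1:ℝ) else 0) with hUP1
    set VP2 : (↑TB → (Fin k → ℝ) × 𝓦) → ℝ := fun v =>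
      ∏ jj ∈ Tz.attach,
        (if g ((v ⟨((jj : Fin n) : ℕ), hmemT _ jj.2⟩).2) = (c (jj : Fin n)).1
          then (1:ℝ) else 0) with hVP2
    set UF : (↑SB → (Fin k → ℝ) × 𝓦) → ℝ := fun v =>
      ((∑ jj ∈ (Finset.univ.filter
            (fun i : Fin n => (c i).2 = tt ∧ (c i).1 = z)).attach,
          (v ⟨((jj : Fin n) : ℕ),
            hmemS _ (hS1z _ (Finset.mem_filter.mp jj.2).2)⟩).1 tt)
          / (((Finset.univ.filter
            (fun i : Fin n => (c i).2 = tt ∧ (c i).1 = z)).card : ℝ))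
        - (∑ jj ∈ (Finset.univ.filter
            (fun i : Fin n => (c i).2 = ss ∧ (c i).1 = z)).attach,
          (v ⟨((jj : Fin n) : ℕ),
            hmemS _ (hS2z _ (Finset.mem_filter.mp jj.2).2)⟩).1 ss)
          / (((Finset.univ.filter
            (fun i : Fin n => (c i).2 = ss ∧ (c i).1 = z)).card : ℝ)))
        * UP1 v with hUF
    set VG : (↑TB → (Fin k → ℝ) × 𝓦) → ℝ := fun v =>
      ((∑ jj ∈ (Finset.univ.filter
            (fun i : Fin n => (c i).2 = tt ∧ (c i).1 = z')).attach,
          (v ⟨((jj : Fin n) : ℕ),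
            hmemT _ (hS1z' _ (Finset.mem_filter.mp jj.2).2)⟩).1 tt)
          / (((Finset.univ.filter
            (fun i : Fin n => (c i).2 = tt ∧ (c i).1 = z')).card : ℝ))
        - (∑ jj ∈ (Finset.univ.filter
            (fun i : Fin n => (c i).2 = ss ∧ (c i).1 = z')).attach,
          (v ⟨((jj : Fin n) : ℕ),
            hmemT _ (hS2z' _ (Finset.mem_filter.mp jj.2).2)⟩).1 ss)
          / (((Finset.univ.filter
            (fun i : Fin n => (c i).2 = ss ∧ (c i).1 = z')).card : ℝ)))
        * VP2 v with hVG
    -- the composed indicator functions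
    set Pone : Ω → ℝ := fun x => UP1 (tupS x) with hPone
    set Ptwo : Ω → ℝ := fun x => VP2 (tupT x) with hPtwo
    have hPone_eq : ∀ x, Pone x
        = ∏ i ∈ Sz, (if Z (i:ℕ) x = (c i).1 then (1:ℝ) else 0) := by
      intro x
      show (∏ jj ∈ Sz.attach,
        (if g (W ((jj : Fin n) : ℕ) x) = (c (jj : Fin n)).1 then (1:ℝ) else 0))
        = ∏ i ∈ Sz, (if Z (i:ℕ) x = (c i).1 then (1:ℝ) else 0)
      simp only [← hZdef]
      exact Finset.prod_attach Sz (fun i => if Z (i:ℕ) x = (c i).1 then (1:ℝ) else 0)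
    have hPtwo_eq : ∀ x, Ptwo x
        = ∏ i ∈ Tz, (if Z (i:ℕ) x = (c i).1 then (1:ℝ) else 0) := by
      intro x
      show (∏ jj ∈ Tz.attach,
        (if g (W ((jj : Fin n) : ℕ) x) = (c (jj : Fin n)).1 then (1:ℝ) else 0))
        = ∏ i ∈ Tz, (if Z (i:ℕ) x = (c i).1 then (1:ℝ) else 0)
      simp only [← hZdef]
      exact Finset.prod_attach Tz (fun i => if Z (i:ℕ) x = (c i).1 then (1:ℝ) else 0)
    have hprod : ∀ x, Pone x * Ptwo x = if x ∈ C then (1:ℝ) else 0 := by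
      intro x
      rw [hPone_eq, hPtwo_eq, hSz, hTz,
        Finset.prod_filter_mul_prod_filter_not Finset.univ
          (fun i : Fin n => (c i).1 = z)
          (fun i : Fin n => if Z (i:ℕ) x = (c i).1 then (1:ℝ) else 0)]
      by_cases hx : x ∈ C
      · rw [if_pos hx]
        exact Finset.prod_eq_one fun i _ => if_pos (Set.mem_iInter.mp hx i)
      · rw [if_neg hx]
        have hexi : ∃ i : Fin n, ¬ Z (i:ℕ) x = (c i).1 := by
          by_contra hcon
          push_neg at hcon
          exact hx (Set.mem_iInter.mpr fun i => hcon i)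
        obtain ⟨i, hi⟩ := hexi
        exact Finset.prod_eq_zero (Finset.mem_univ i) (if_neg hi)
    -- composition identities for the main functionals
    have hUFcomp : ∀ x, UF (tupS x) = F x * Pone x := by
      intro x
      rw [hUF]
      simp only
      congr 1
      rw [hFdef]
      simp only
      congr 1
      · congr 1
        exact Finset.sum_attach _ (fun i : Fin n => Y (i:ℕ) tt x)
      · congr 1
        exact Finset.sum_attach _ (fun i : Fin n => Y (i:ℕ) ss x)
    have hVGcomp : ∀ x, VG (tupT x) = G x * Ptwo x := by
      intro x
      rw [hVG]
      simp only
      congr 1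
      rw [hGdef]
      simp only
      congr 1
      · congr 1
        exact Finset.sum_attach _ (fun i : Fin n => Y (i:ℕ) tt x)
      · congr 1
        exact Finset.sum_attach _ (fun i : Fin n => Y (i:ℕ) ss x)
    -- measurability of the block functionals
    have hUP1m : Measurable UP1 := by
      rw [hUP1]
      refine Finset.measurable_prod _ fun jj _ => ?_
      exact Measurable.ite
        (((hg.comp measurable_snd).comp (measurable_pi_apply _)) (measurableSet_singleton _))
        measurable_const measurable_const
    have hVP2m : Measurable VP2 := by
      rw [hVP2]
      refine Finset.measurable_prod _ fun jj _ => ?_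
      exact Measurable.ite
        (((hg.comp measurable_snd).comp (measurable_pi_apply _)) (measurableSet_singleton _))
        measurable_const measurable_const
    have hUFm : Measurable UF := by
      rw [hUF]
      refine Measurable.mul ?_ hUP1m
      refine Measurable.sub (Measurable.div_const ?_ _) (Measurable.div_const ?_ _)
      · exact Finset.measurable_sum _ fun jj _ =>
          (measurable_pi_apply tt).comp (measurable_fst.comp (measurable_pi_apply _))
      · exact Finset.measurable_sum _ fun jj _ =>
          (measurable_pi_apply ss).comp (measurable_fst.comp (measurable_pi_apply _))
    have hVGm : Measurable VG := by
      rw [hVG]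
      refine Measurable.mul ?_ hVP2m
      refine Measurable.sub (Measurable.div_const ?_ _) (Measurable.div_const ?_ _)
      · exact Finset.measurable_sum _ fun jj _ =>
          (measurable_pi_apply tt).comp (measurable_fst.comp (measurable_pi_apply _))
      · exact Finset.measurable_sum _ fun jj _ =>
          (measurable_pi_apply ss).comp (measurable_fst.comp (measurable_pi_apply _))
    -- boundedness of the indicators
    have hPone01 : ∀ x, 0 ≤ Pone x ∧ Pone x ≤ 1 := by
      intro x
      rw [hPone_eq]
      constructor
      · exact Finset.prod_nonneg fun i _ => by positivity
      · exact Finset.prod_le_one (fun i _ => by positivity)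
          (fun i _ => by split <;> norm_num)
    have hPtwo01 : ∀ x, 0 ≤ Ptwo x ∧ Ptwo x ≤ 1 := by
      intro x
      rw [hPtwo_eq]
      constructor
      · exact Finset.prod_nonneg fun i _ => by positivity
      · exact Finset.prod_le_one (fun i _ => by positivity)
          (fun i _ => by split <;> norm_num)
    have hPonemeas : Measurable Pone :=
      hUP1m.comp (measurable_pi_iff.mpr fun j => hXmeas _)
    have hPtwomeas : Measurable Ptwo :=
      hVP2m.comp (measurable_pi_iff.mpr fun j => hXmeas _)
    have hPone_int : Integrable Pone P := by
      refine Integrable.mono' (integrable_const (1:ℝ)) hPonemeas.aestronglyMeasurable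
        (Eventually.of_forall fun x => ?_)
      rw [Real.norm_eq_abs, abs_of_nonneg (hPone01 x).1]
      exact (hPone01 x).2
    have hPtwo_int : Integrable Ptwo P := by
      refine Integrable.mono' (integrable_const (1:ℝ)) hPtwomeas.aestronglyMeasurable
        (Eventually.of_forall fun x => ?_)
      rw [Real.norm_eq_abs, abs_of_nonneg (hPtwo01 x).1]
      exact (hPtwo01 x).2
    have hbdd_mul : ∀ (u w : Ω → ℝ), Integrable u P → Measurable w →
        (∀ x, 0 ≤ w x ∧ w x ≤ 1) → Integrable (fun x => u x * w x) P := by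
      intro u w hu hw hw01
      have h := Integrable.bdd_mul (c := 1) hu hw.aestronglyMeasurable
        (Eventually.of_forall fun x => by
          rw [Real.norm_eq_abs, abs_of_nonneg (hw01 x).1]; exact (hw01 x).2)
      exact h.congr (Eventually.of_forall fun x => mul_comm _ _)
    have hFP1_int : Integrable (fun x => F x * Pone x) P := hbdd_mul F Pone hFint hPonemeas hPone01
    have hGP2_int : Integrable (fun x => G x * Ptwo x) P := hbdd_mul G Ptwo hGint hPtwomeas hPtwo01
    -- transported integrability
    have hintUF : Integrable (fun x => UF (tupS x)) P :=
      hFP1_int.congr (Eventually.of_forall fun x => (hUFcomp x).symm)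
    have hintVG : Integrable (fun x => VG (tupT x)) P :=
      hGP2_int.congr (Eventually.of_forall fun x => (hVGcomp x).symm)
    have hintUP1 : Integrable (fun x => UP1 (tupS x)) P := hPone_int
    have hintVP2 : Integrable (fun x => VP2 (tupT x)) P := hPtwo_int
    -- the four factorizations
    have E1 : ∫ x, (F x * Pone x) * (G x * Ptwo x) ∂P
        = (∫ x, F x * Pone x ∂P) * ∫ x, G x * Ptwo x ∂P := by
      have e := (hIF.comp hUFm hVGm).integral_mul_eq_mul_integral hintUF.aestronglyMeasurable hintVG.aestronglyMeasurable
      rw [show (UF ∘ tupS) = fun x => F x * Pone x from funext hUFcomp,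
        show (VG ∘ tupT) = fun x => G x * Ptwo x from funext hVGcomp] at e
      exact e
    have E2 : ∫ x, (F x * Pone x) * Ptwo x ∂P
        = (∫ x, F x * Pone x ∂P) * ∫ x, Ptwo x ∂P := by
      have e := (hIF.comp hUFm hVP2m).integral_mul_eq_mul_integral hintUF.aestronglyMeasurable hintVP2.aestronglyMeasurable
      rw [show (UF ∘ tupS) = fun x => F x * Pone x from funext hUFcomp] at e
      exact e
    have E3 : ∫ x, Pone x * (G x * Ptwo x) ∂P
        = (∫ x, Pone x ∂P) * ∫ x, G x * Ptwo x ∂P := by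
      have e := (hIF.comp hUP1m hVGm).integral_mul_eq_mul_integral hintUP1.aestronglyMeasurable hintVG.aestronglyMeasurable
      rw [show (VG ∘ tupT) = fun x => G x * Ptwo x from funext hVGcomp] at e
      exact e
    have E4 : ∫ x, Pone x * Ptwo x ∂P = (∫ x, Pone x ∂P) * ∫ x, Ptwo x ∂P :=
      (hIF.comp hUP1m hVP2m).integral_mul_eq_mul_integral hintUP1.aestronglyMeasurable hintVP2.aestronglyMeasurable
    -- rewrite the set integrals over C
    have hCint : ∀ (ψ : Ω → ℝ), ∫ x in C, ψ x ∂P = ∫ x, ψ x * (Pone x * Ptwo x) ∂P := by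
      intro ψ
      rw [← integral_indicator hCamb]
      refine integral_congr_ae (Eventually.of_forall fun x => ?_)
      show C.indicator ψ x = ψ x * (Pone x * Ptwo x)
      rw [hprod x]
      by_cases hx : x ∈ C
      · rw [if_pos hx, Set.indicator_of_mem hx, mul_one]
      · rw [if_neg hx, Set.indicator_of_notMem hx, mul_zero]
    have hPCint : (P C).toReal = ∫ x, Pone x * Ptwo x ∂P := by
      have : (fun x => Pone x * Ptwo x) = C.indicator (fun _ => (1:ℝ)) := by
        funext x
        rw [hprod x, Set.indicator_apply]
      rw [this, integral_indicator hCamb, setIntegral_const, smul_eq_mul, mul_one, measureReal_def]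
    have hmm : ∫ x in C, F x * G x ∂P
        = (∫ x, F x * Pone x ∂P) * ∫ x, G x * Ptwo x ∂P := by
      rw [hCint (fun x => F x * G x), ← E1]
      exact integral_congr_ae (Eventually.of_forall fun x => by ring)
    have haa : ∫ x in C, F x ∂P = (∫ x, F x * Pone x ∂P) * ∫ x, Ptwo x ∂P := by
      rw [hCint F, ← E2]
      exact integral_congr_ae (Eventually.of_forall fun x => by ring)
    have hbb : ∫ x in C, G x ∂P = (∫ x, Pone x ∂P) * ∫ x, G x * Ptwo x ∂P := by
      rw [hCint G, ← E3]
      exact integral_congr_ae (Eventually.of_forall fun x => by ring)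
    rw [hmm, haa, hbb, hPCint, E4]
    ring
  -- final assembly
  rw [hABC] at hω ⊢
  have hPA : P (B ∩ C) ≠ 0 := hω
  have hPC : P C ≠ 0 := fun h => hPA (measure_mono_null Set.inter_subset_right h)
  have hrAne : (P (B ∩ C)).toReal ≠ 0 := ENNReal.toReal_ne_zero.mpr ⟨hPA, measure_ne_top _ _⟩
  have hrCne : (P C).toReal ≠ 0 := ENNReal.toReal_ne_zero.mpr ⟨hPC, measure_ne_top _ _⟩
  have hIf : ∫ x in B ∩ C, ffun x ∂P = ∫ x in B ∩ C, F x ∂P :=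
    setIntegral_congr_fun (hBamb.inter hCamb) hfF
  have hIg : ∫ x in B ∩ C, gfun x ∂P = ∫ x in B ∩ C, G x ∂P :=
    setIntegral_congr_fun (hBamb.inter hCamb) hgG
  have hIfg : ∫ x in B ∩ C, ffun x * gfun x ∂P = ∫ x in B ∩ C, F x * G x ∂P :=
    setIntegral_congr_fun (hBamb.inter hCamb) fun x hx => by rw [hfF x hx, hgG x hx]
  rw [hIf, hIg, hIfg]
  have eF : ∫ x in B ∩ C, F x ∂P
      = (P (B ∩ C)).toReal * (∫ x in C, F x ∂P) / (P C).toReal :=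
    (eq_div_iff hrCne).mpr hQF
  have eG : ∫ x in B ∩ C, G x ∂P
      = (P (B ∩ C)).toReal * (∫ x in C, G x ∂P) / (P C).toReal :=
    (eq_div_iff hrCne).mpr hQG
  have eFG : ∫ x in B ∩ C, F x * G x ∂P
      = (P (B ∩ C)).toReal * (∫ x in C, F x * G x ∂P) / (P C).toReal :=
    (eq_div_iff hrCne).mpr hQFG
  rw [eF, eG, eFG]
  field_simp
  linear_combination hP2'
end
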